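/- arXiv:1605.03830 — 8 statements merged into one kernel-verified Lean document; each statement's English description precedes it below -/
import Mathlib

section
/- Let α > 0, ξ < 0 and n ∈ ℕ. Assume L_n^{α-1}(ξ) ≠ 0 and L_{n+1}^{α-1}(ξ) ≠ 0 (which holds since all zeros of Laguerre–Sonin polynomials are positive). Let P_n be the real polynomial satisfying (X - ξ)·P_n(X) = L_{n+1}^{α-1}(X) - (L_{n+1}^{α-1}(ξ)/L_n^{α-1}(ξ))·L_n^{α-1}(X) (this division is exact since the right-hand side vanishes at ξ). Then P_n is monic of degree n, ∫_0^∞ q(x)·P_n(x)·(x-ξ)·x^{α-1}·e^{-x} dx = 0 for every real polynomial q of degree at most n-1, and ∫_0^∞ P_n(x)²·(x-ξ)·x^{α-1}·e^{-x} dx = - n!·Γ(α+n)·L_{n+1}^{α-1}(ξ)/L_n^{α-1}(ξ). -/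
open Polynomial MeasureTheory
open Set Finset

/-- The monic Laguerre–Sonin polynomial `L_n^α`. -/
noncomputable def laguerreS (α : ℝ) (n : ℕ) : Polynomial ℝ :=
  ∑ m ∈ Finset.range (n + 1),
    Polynomial.C ((-1 : ℝ) ^ n * n.factorial * ((-1 : ℝ) ^ m / m.factorial) *
      (Real.Gamma ((n : ℝ) + α + 1) /
        (Real.Gamma ((m : ℝ) + α + 1) * (n - m).factorial))) *
      Polynomial.X ^ m

lemma laguerreS_coeff (β : ℝ) (n k : ℕ) :
    (laguerreS β n).coeff k = if k ≤ n then
      (-1 : ℝ) ^ n * n.factorial * ((-1 : ℝ) ^ k / k.factorial) *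
      (Real.Gamma ((n : ℝ) + β + 1) /
        (Real.Gamma ((k : ℝ) + β + 1) * (n - k).factorial)) else 0 := by
  rw [laguerreS, finset_sum_coeff]
  simp only [coeff_C_mul, coeff_X_pow, mul_ite, mul_one, mul_zero,
    Finset.sum_ite_eq, Finset.mem_range, Nat.lt_succ_iff]

lemma laguerreS_coeff_self (β : ℝ) (hβ : -1 < β) (n : ℕ) :
    (laguerreS β n).coeff n = 1 := by
  have h0 : (0:ℝ) < (n : ℝ) + β + 1 := by
    have : (0:ℝ) ≤ n := Nat.cast_nonneg n
    linarith
  have hG : Real.Gamma ((n : ℝ) + β + 1) ≠ 0 := (Real.Gamma_pos_of_pos h0).ne'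
  have hf : (n.factorial : ℝ) ≠ 0 := Nat.cast_ne_zero.mpr n.factorial_ne_zero
  rw [laguerreS_coeff, if_pos le_rfl, Nat.sub_self]
  field_simp
  ring_nf
  rw [mul_comm n 2, pow_mul]; norm_num

lemma laguerreS_natDegree (β : ℝ) (hβ : -1 < β) (n : ℕ) :
    (laguerreS β n).natDegree = n := by
  have hle : (laguerreS β n).natDegree ≤ n := by
    apply natDegree_le_iff_coeff_eq_zero.mpr
    intro m hm
    rw [laguerreS_coeff, if_neg (by omega)]
  have : (laguerreS β n).coeff n ≠ 0 := by
    rw [laguerreS_coeff_self β hβ n]; norm_num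
  exact le_antisymm hle (le_natDegree_of_ne_zero this)

lemma laguerreS_monic (β : ℝ) (hβ : -1 < β) (n : ℕ) :
    (laguerreS β n).Monic := by
  rw [Monic, leadingCoeff, laguerreS_natDegree β hβ n, laguerreS_coeff_self β hβ n]

lemma coeff_comp_X_add_one (f : Polynomial ℝ) (N k : ℕ) (hN : f.natDegree < N) :
    (f.comp (X + 1)).coeff k = ∑ e ∈ Finset.range N, f.coeff e * (e.choose k) := by
  have h1 : f.comp (X + 1) = ∑ e ∈ Finset.range (f.natDegree + 1),
      C (f.coeff e) * (X + 1) ^ e := by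
    rw [comp_eq_sum_left]
    exact f.sum_over_range (fun _ => by simp)
  rw [h1, finset_sum_coeff]
  have h2 : ∀ e ∈ Finset.range (f.natDegree + 1),
      (C (f.coeff e) * (X + 1) ^ e).coeff k = f.coeff e * (e.choose k) := by
    intro e _
    rw [coeff_C_mul, coeff_X_add_one_pow]
  rw [Finset.sum_congr rfl h2]
  apply Finset.sum_subset (Finset.range_subset_range.mpr hN)
  intro e _ he
  rw [Finset.mem_range, not_lt] at he
  rw [coeff_eq_zero_of_natDegree_lt (by omega), zero_mul]

lemma alt_sum (n : ℕ) (f : Polynomial ℝ) (hf : f.natDegree ≤ n) :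
    ∑ j ∈ Finset.range (n + 1), (-1 : ℝ) ^ j * (n.choose j) * f.eval (j : ℝ) =
      (-1 : ℝ) ^ n * n.factorial * f.coeff n := by
  induction n generalizing f with
  | zero =>
    have : f = C (f.coeff 0) := f.eq_C_of_natDegree_le_zero hf
    rw [this]; simp
  | succ n ih =>
    set g : Polynomial ℝ := f.comp (X + 1) - f with hg
    have hcoeff : ∀ k, g.coeff k =
        (∑ e ∈ Finset.range (n + 2), f.coeff e * (e.choose k)) - f.coeff k := by
      intro k
      rw [hg, coeff_sub, coeff_comp_X_add_one f (n+2) k (by omega)]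
    have hgdeg : g.natDegree ≤ n := by
      apply natDegree_le_iff_coeff_eq_zero.mpr
      intro m hm
      rw [hcoeff]
      have hpt : ∀ e ∈ Finset.range (n + 2), f.coeff e * (e.choose m : ℝ) =
          if e = m then f.coeff m else 0 := by
        intro e he
        rw [Finset.mem_range] at he
        by_cases h : e = m
        · subst h; simp
        · rw [if_neg h]
          by_cases h2 : e < m
          · rw [Nat.choose_eq_zero_of_lt h2]; simp
          · have : f.coeff e = 0 := coeff_eq_zero_of_natDegree_lt (by omega)
            simp [this]
      rw [Finset.sum_congr rfl hpt, Finset.sum_ite_eq' (Finset.range (n+2)) m]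
      by_cases h : m ∈ Finset.range (n+2)
      · rw [if_pos h]; ring
      · rw [if_neg h]
        rw [Finset.mem_range, not_lt] at h
        rw [coeff_eq_zero_of_natDegree_lt (by omega)]
        simp
    have hgn : g.coeff n = (n + 1 : ℝ) * f.coeff (n + 1) := by
      rw [hcoeff]
      rw [Finset.sum_range_succ, Finset.sum_range_succ]
      have hpt : ∀ e ∈ Finset.range n, f.coeff e * (e.choose n : ℝ) = 0 := by
        intro e he
        rw [Finset.mem_range] at he
        rw [Nat.choose_eq_zero_of_lt he]; simp
      rw [Finset.sum_congr rfl hpt, Finset.sum_const_zero]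
      simp [Nat.choose_succ_self_right]
      ring
    have hgev : ∀ j : ℕ, g.eval (j : ℝ) = f.eval ((j : ℝ) + 1) - f.eval (j : ℝ) := by
      intro j; rw [hg]; simp [eval_comp]
    set S₁ : ℝ := ∑ j ∈ Finset.range (n + 1), (-1 : ℝ) ^ j * (n.choose j) * f.eval (j : ℝ) with hS₁
    set S₂ : ℝ := ∑ j ∈ Finset.range (n + 1), (-1 : ℝ) ^ j * (n.choose j) * f.eval ((j : ℝ) + 1) with hS₂
    have hgsum : ∑ j ∈ Finset.range (n + 1), (-1 : ℝ) ^ j * (n.choose j) * g.eval (j : ℝ)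
        = S₂ - S₁ := by
      rw [hS₁, hS₂, ← Finset.sum_sub_distrib]
      apply Finset.sum_congr rfl
      intro j _
      rw [hgev j]; ring
    -- e1 : sum with shifted choose
    have e1 : ∑ j ∈ Finset.range (n + 1), (-1 : ℝ) ^ (j+1) * (n.choose (j+1)) * f.eval ((j:ℝ) + 1)
        = S₁ - f.eval 0 := by
      have h3 := Finset.sum_range_succ' (fun j => (-1 : ℝ) ^ j * (n.choose j) * f.eval (j : ℝ)) (n+1)
      have h2 := Finset.sum_range_succ (fun j => (-1 : ℝ) ^ j * (n.choose j) * f.eval (j : ℝ)) (n+1)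
      rw [h2] at h3
      rw [Nat.choose_succ_self] at h3
      push_cast at h3 ⊢
      rw [← hS₁] at h3
      simp at h3
      linarith [h3]
    have e2 : ∑ j ∈ Finset.range (n + 2), (-1 : ℝ) ^ j * ((n+1).choose j) * f.eval (j : ℝ)
        = S₁ - S₂ := by
      rw [Finset.sum_range_succ' (fun j => (-1 : ℝ) ^ j * ((n+1).choose j) * f.eval (j : ℝ)) (n+1)]
      have hpt : ∀ j ∈ Finset.range (n + 1),
          (-1 : ℝ) ^ (j+1) * ((n+1).choose (j+1)) * f.eval ((j+1 : ℕ) : ℝ) =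
          -((-1 : ℝ) ^ j * (n.choose j) * f.eval ((j:ℝ) + 1))
            + (-1 : ℝ) ^ (j+1) * (n.choose (j+1)) * f.eval ((j:ℝ) + 1) := by
        intro j _
        rw [Nat.choose_succ_succ]
        push_cast
        ring
      rw [Finset.sum_congr rfl hpt, Finset.sum_add_distrib, e1]
      have : ∑ j ∈ Finset.range (n+1), -((-1 : ℝ) ^ j * (n.choose j) * f.eval ((j:ℝ) + 1)) = -S₂ := by
        rw [hS₂, ← Finset.sum_neg_distrib]
      rw [this]
      simp
      ring
    have hfin : S₂ - S₁ = (-1 : ℝ) ^ n * n.factorial * g.coeff n :=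
      hgsum.symm.trans (ih g hgdeg)
    rw [hgn] at hfin
    rw [e2]
    push_cast [Nat.factorial_succ, pow_succ]
    linear_combination -hfin

noncomputable def ascPoly (α : ℝ) (m : ℕ) : Polynomial ℝ :=
  ∏ i ∈ Finset.range m, (X + C (α + i))

lemma ascPoly_monic (α : ℝ) (m : ℕ) : (ascPoly α m).Monic :=
  monic_prod_of_monic _ _ (fun i _ => monic_X_add_C _)

lemma ascPoly_natDegree (α : ℝ) (m : ℕ) : (ascPoly α m).natDegree = m := by
  rw [ascPoly, natDegree_prod]
  · have h : ∀ i ∈ Finset.range m, (X + C (α + (i:ℕ))).natDegree = 1 :=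
      fun i _ => natDegree_X_add_C _
    rw [Finset.sum_congr rfl h]
    simp
  · intro i _
    exact X_add_C_ne_zero _

lemma ascPoly_coeff (α : ℝ) (m n : ℕ) (hmn : m ≤ n) :
    (ascPoly α m).coeff n = if m = n then 1 else 0 := by
  by_cases h : m = n
  · subst h
    rw [if_pos rfl]
    have := ascPoly_monic α m
    rw [Monic, leadingCoeff, ascPoly_natDegree] at this
    exact this
  · rw [if_neg h]
    exact coeff_eq_zero_of_natDegree_lt (by rw [ascPoly_natDegree]; omega)

lemma ascPoly_eval (α : ℝ) (m : ℕ) (x : ℝ) :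
    (ascPoly α m).eval x = ∏ i ∈ Finset.range m, (x + (α + i)) := by
  simp [ascPoly, eval_prod]

lemma Gamma_ratio (c : ℝ) (hc : 0 < c) (m : ℕ) :
    Real.Gamma (c + m) = Real.Gamma c * ∏ i ∈ Finset.range m, (c + i) := by
  induction m with
  | zero => simp
  | succ m ih =>
    have h1 : c + ((m : ℝ) + 1) = (c + m) + 1 := by ring
    have h2 : (0:ℝ) < c + m := by positivity
    push_cast
    rw [h1, Real.Gamma_add_one h2.ne', ih, Finset.prod_range_succ]
    push_cast
    ring


lemma weight_integrable (α : ℝ) (hα : 0 < α) (k : ℕ) :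
    IntegrableOn (fun x => x ^ k * x ^ (α - 1) * Real.exp (-x)) (Set.Ioi (0:ℝ)) := by
  have h0 : (0:ℝ) < α + k := by positivity
  apply (Real.GammaIntegral_convergent h0).congr_fun _ measurableSet_Ioi
  intro x hx
  rw [Set.mem_Ioi] at hx
  show Real.exp (-x) * x ^ (α + (k:ℝ) - 1) = x ^ k * x ^ (α - 1) * Real.exp (-x)
  rw [show α + (k:ℝ) - 1 = (α - 1) + (k:ℝ) by ring, Real.rpow_add hx, Real.rpow_natCast]
  ring

lemma weight_integral (α : ℝ) (hα : 0 < α) (k : ℕ) :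
    ∫ x in Set.Ioi (0:ℝ), x ^ k * x ^ (α - 1) * Real.exp (-x) = Real.Gamma (α + k) := by
  have h0 : (0:ℝ) < α + k := by positivity
  rw [Real.Gamma_eq_integral h0]
  apply MeasureTheory.setIntegral_congr_fun measurableSet_Ioi
  intro x hx
  rw [Set.mem_Ioi] at hx
  show x ^ k * x ^ (α - 1) * Real.exp (-x) = Real.exp (-x) * x ^ (α + (k:ℝ) - 1)
  rw [show α + (k:ℝ) - 1 = (α - 1) + (k:ℝ) by ring, Real.rpow_add hx, Real.rpow_natCast]
  ring

lemma poly_weight_integrable (α : ℝ) (hα : 0 < α) (p : Polynomial ℝ) :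
    IntegrableOn (fun x => p.eval x * x ^ (α - 1) * Real.exp (-x)) (Set.Ioi (0:ℝ)) := by
  have h : (fun x => p.eval x * x ^ (α - 1) * Real.exp (-x)) =
      fun x => ∑ k ∈ Finset.range (p.natDegree + 1),
        p.coeff k * (x ^ k * x ^ (α - 1) * Real.exp (-x)) := by
    funext x
    rw [Polynomial.eval_eq_sum_range, Finset.sum_mul, Finset.sum_mul]
    apply Finset.sum_congr rfl
    intro k _
    ring
  rw [h]
  apply MeasureTheory.integrable_finset_sum
  intro k _
  exact (weight_integrable α hα k).const_mul _

lemma I_pow_mul (α : ℝ) (hα : 0 < α) (m : ℕ) (p : Polynomial ℝ) :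
    ∫ x in Set.Ioi (0:ℝ), (X ^ m * p).eval x * x ^ (α - 1) * Real.exp (-x) =
      ∑ k ∈ Finset.range (p.natDegree + 1), p.coeff k * Real.Gamma (α + k + m) := by
  have h : Set.EqOn (fun x => (X ^ m * p).eval x * x ^ (α - 1) * Real.exp (-x))
      (fun x => ∑ k ∈ Finset.range (p.natDegree + 1),
        p.coeff k * (x ^ (k + m) * x ^ (α - 1) * Real.exp (-x))) (Set.Ioi (0:ℝ)) := by
    intro x _
    show (X ^ m * p).eval x * x ^ (α - 1) * Real.exp (-x) = _
    rw [eval_mul, eval_pow, eval_X, Polynomial.eval_eq_sum_range, Finset.mul_sum, Finset.sum_mul, Finset.sum_mul]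
    apply Finset.sum_congr rfl
    intro k _
    rw [pow_add]
    ring
  rw [MeasureTheory.setIntegral_congr_fun measurableSet_Ioi h]
  rw [MeasureTheory.integral_finset_sum _
    (fun k _ => ((weight_integrable α hα (k + m)).const_mul _))]
  apply Finset.sum_congr rfl
  intro k _
  rw [MeasureTheory.integral_const_mul, weight_integral α hα (k + m)]
  push_cast
  ring_nf

lemma I_pow_mul_laguerre (α : ℝ) (hα : 0 < α) (m n : ℕ) (hm : m ≤ n) :
    ∫ x in Set.Ioi (0:ℝ), (X ^ m * laguerreS (α - 1) n).eval x * x ^ (α - 1) * Real.exp (-x) =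
      if m = n then (n.factorial : ℝ) * Real.Gamma (α + n) else 0 := by
  have hβ : (-1:ℝ) < α - 1 := by linarith
  have hND : (laguerreS (α - 1) n).natDegree = n := laguerreS_natDegree _ hβ n
  rw [I_pow_mul α hα m _, hND]
  have hΓn : Real.Gamma ((n:ℝ) + (α - 1) + 1) = Real.Gamma (α + n) := by ring_nf
  have hterm : ∀ k ∈ Finset.range (n + 1),
      (laguerreS (α - 1) n).coeff k * Real.Gamma (α + k + m) =
      (-1:ℝ) ^ n * Real.Gamma (α + n) *
        ((-1:ℝ) ^ k * (n.choose k) * (ascPoly α m).eval (k : ℝ)) := by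
    intro k hk
    rw [Finset.mem_range, Nat.lt_succ_iff] at hk
    rw [laguerreS_coeff, if_pos hk]
    have hc : (0:ℝ) < α + k := by positivity
    have hΓ : Real.Gamma (α + k + m) = Real.Gamma (α + k) * (ascPoly α m).eval (k : ℝ) := by
      rw [Gamma_ratio (α + k) hc m, ascPoly_eval]
      congr 1
      apply Finset.prod_congr rfl
      intro i _
      ring
    have hΓk : Real.Gamma ((k:ℝ) + (α - 1) + 1) = Real.Gamma (α + k) := by ring_nf
    rw [hΓ, hΓn, hΓk, Nat.cast_choose ℝ hk]
    have h1 : Real.Gamma (α + k) ≠ 0 := (Real.Gamma_pos_of_pos hc).ne'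
    have h2 : (k.factorial : ℝ) ≠ 0 := Nat.cast_ne_zero.mpr k.factorial_ne_zero
    have h3 : ((n - k).factorial : ℝ) ≠ 0 := Nat.cast_ne_zero.mpr (n - k).factorial_ne_zero
    field_simp
  rw [Finset.sum_congr rfl hterm, ← Finset.mul_sum]
  rw [alt_sum n (ascPoly α m) (by rw [ascPoly_natDegree]; omega)]
  rw [ascPoly_coeff α m n hm]
  by_cases h : m = n
  · rw [if_pos h, if_pos h]
    have h4 : (-1:ℝ)^n * (-1:ℝ)^n = 1 := by
      rw [← pow_add, ← two_mul, pow_mul]; norm_num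
    linear_combination ((n.factorial : ℝ) * Real.Gamma (α + n)) * h4
  · rw [if_neg h, if_neg h]
    ring

lemma I_mul_laguerre (α : ℝ) (hα : 0 < α) (n : ℕ) (p : Polynomial ℝ) (hp : p.natDegree ≤ n) :
    ∫ x in Set.Ioi (0:ℝ), (p * laguerreS (α - 1) n).eval x * x ^ (α - 1) * Real.exp (-x) =
      p.coeff n * ((n.factorial : ℝ) * Real.Gamma (α + n)) := by
  have hps : p = ∑ k ∈ Finset.range (n + 1), C (p.coeff k) * X ^ k := by
    conv_lhs => rw [p.as_sum_range' (n+1) (by omega)]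
    apply Finset.sum_congr rfl
    intro k _
    rw [← smul_X_eq_monomial, smul_eq_C_mul]
  have h : Set.EqOn (fun x => (p * laguerreS (α - 1) n).eval x * x ^ (α - 1) * Real.exp (-x))
      (fun x => ∑ k ∈ Finset.range (n + 1),
        p.coeff k * ((X ^ k * laguerreS (α - 1) n).eval x * x ^ (α - 1) * Real.exp (-x)))
      (Set.Ioi (0:ℝ)) := by
    intro x _
    show (p * laguerreS (α - 1) n).eval x * x ^ (α - 1) * Real.exp (-x) = _
    conv_lhs => rw [hps]
    rw [Finset.sum_mul, eval_finset_sum, Finset.sum_mul, Finset.sum_mul]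
    apply Finset.sum_congr rfl
    intro k _
    simp only [eval_mul, eval_C, eval_pow, eval_X]
    ring
  rw [MeasureTheory.setIntegral_congr_fun measurableSet_Ioi h]
  rw [MeasureTheory.integral_finset_sum _ (fun k _ => ?_)]
  swap
  · exact ((poly_weight_integrable α hα (X ^ k * laguerreS (α - 1) n)).const_mul _)
  have hpt : ∀ k ∈ Finset.range (n + 1),
      (∫ x in Set.Ioi (0:ℝ), p.coeff k *
        ((X ^ k * laguerreS (α - 1) n).eval x * x ^ (α - 1) * Real.exp (-x))) =
      if k = n then p.coeff k * ((n.factorial : ℝ) * Real.Gamma (α + n)) else 0 := by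
    intro k hk
    rw [Finset.mem_range, Nat.lt_succ_iff] at hk
    rw [MeasureTheory.integral_const_mul, I_pow_mul_laguerre α hα k n hk]
    by_cases h : k = n
    · rw [if_pos h, if_pos h]
    · rw [if_neg h, if_neg h, mul_zero]
  rw [Finset.sum_congr rfl hpt, Finset.sum_ite_eq' (Finset.range (n+1)) n]
  rw [if_pos (Finset.self_mem_range_succ n)]


theorem stmt0 (α ξ : ℝ) (hα : 0 < α) (hξ : ξ < 0) (n : ℕ)
    (h1 : (laguerreS (α - 1) n).eval ξ ≠ 0)
    (h2 : (laguerreS (α - 1) (n + 1)).eval ξ ≠ 0)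
    (P : Polynomial ℝ)
    (hP : (Polynomial.X - Polynomial.C ξ) * P =
      laguerreS (α - 1) (n + 1) -
        Polynomial.C ((laguerreS (α - 1) (n + 1)).eval ξ / (laguerreS (α - 1) n).eval ξ) *
          laguerreS (α - 1) n) :
    P.Monic ∧ P.natDegree = n ∧
    (∀ q : Polynomial ℝ, q.degree < n →
      ∫ x in Set.Ioi (0 : ℝ),
        q.eval x * P.eval x * (x - ξ) * x ^ (α - 1) * Real.exp (-x) = 0) ∧
    ∫ x in Set.Ioi (0 : ℝ),
        (P.eval x) ^ 2 * (x - ξ) * x ^ (α - 1) * Real.exp (-x) =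
      -((n.factorial : ℝ) * Real.Gamma (α + n) *
        (laguerreS (α - 1) (n + 1)).eval ξ / (laguerreS (α - 1) n).eval ξ) := by

  have hβ : (-1:ℝ) < α - 1 := by linarith
  set c : ℝ := (laguerreS (α - 1) (n + 1)).eval ξ / (laguerreS (α - 1) n).eval ξ with hc
  set R : Polynomial ℝ := laguerreS (α - 1) (n + 1) - C c * laguerreS (α - 1) n with hR
  have hLm1 : (laguerreS (α - 1) (n + 1)).Monic := laguerreS_monic _ hβ (n + 1)
  have hLm0 : (laguerreS (α - 1) n).Monic := laguerreS_monic _ hβ n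
  have hdegL1 : (laguerreS (α - 1) (n + 1)).degree = ((n + 1 : ℕ) : WithBot ℕ) := by
    rw [degree_eq_natDegree hLm1.ne_zero, laguerreS_natDegree _ hβ]
  have hdegL0 : (laguerreS (α - 1) n).degree = ((n : ℕ) : WithBot ℕ) := by
    rw [degree_eq_natDegree hLm0.ne_zero, laguerreS_natDegree _ hβ]
  have hd : (-(C c * laguerreS (α - 1) n)).degree < (laguerreS (α - 1) (n + 1)).degree := by
    rw [degree_neg, hdegL1]
    apply lt_of_le_of_lt (degree_mul_le _ _)
    calc (C c).degree + (laguerreS (α - 1) n).degree ≤ 0 + ((n : ℕ) : WithBot ℕ) :=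
          add_le_add degree_C_le (le_of_eq hdegL0)
      _ = ((n : ℕ) : WithBot ℕ) := by rw [zero_add]
      _ < ((n + 1 : ℕ) : WithBot ℕ) := by exact_mod_cast Nat.lt_succ_self n
  have hRadd : R = laguerreS (α - 1) (n + 1) + -(C c * laguerreS (α - 1) n) := by
    rw [hR, sub_eq_add_neg]
  have hRmonic : R.Monic := by rw [hRadd]; exact hLm1.add_of_left hd
  have hRdeg : R.degree = ((n + 1 : ℕ) : WithBot ℕ) := by
    rw [hRadd, degree_add_eq_left_of_degree_lt hd, hdegL1]
  have hRnd : R.natDegree = n + 1 := natDegree_eq_of_degree_eq_some hRdeg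
  have hPR : (X - C ξ) * P = R := hP
  have hPm : P.Monic := Monic.of_mul_monic_left (monic_X_sub_C ξ) (by rw [hPR]; exact hRmonic)
  have hPnd : P.natDegree = n := by
    have h := congrArg Polynomial.natDegree hPR
    rw [natDegree_mul (X_sub_C_ne_zero ξ) hPm.ne_zero, natDegree_X_sub_C, hRnd] at h
    omega
  -- generic additivity
  have Iadd : ∀ a b : Polynomial ℝ,
      (∫ x in Set.Ioi (0:ℝ), (a + b).eval x * x ^ (α - 1) * Real.exp (-x)) =
      (∫ x in Set.Ioi (0:ℝ), a.eval x * x ^ (α - 1) * Real.exp (-x)) +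
      (∫ x in Set.Ioi (0:ℝ), b.eval x * x ^ (α - 1) * Real.exp (-x)) := by
    intro a b
    rw [MeasureTheory.setIntegral_congr_fun measurableSet_Ioi
      (g := fun x => a.eval x * x ^ (α - 1) * Real.exp (-x)
        + b.eval x * x ^ (α - 1) * Real.exp (-x))
      (fun x _ => by simp only [eval_add]; ring)]
    exact MeasureTheory.integral_add (poly_weight_integrable α hα a)
      (poly_weight_integrable α hα b)
  refine ⟨hPm, hPnd, ?_, ?_⟩
  · intro q hq
    have hq1 : q.degree < ((n + 1 : ℕ) : WithBot ℕ) :=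
      lt_of_lt_of_le hq (by exact_mod_cast Nat.le_succ n)
    have hqnd : q.natDegree ≤ n + 1 := by
      by_cases h0 : q = 0
      · simp [h0]
      · exact le_of_lt ((natDegree_lt_iff_degree_lt h0).mpr hq1)
    have hqnd' : (-(C c * q)).natDegree ≤ n := by
      by_cases h0 : q = 0
      · simp [h0]
      · rw [natDegree_neg]
        apply le_trans (natDegree_mul_le)
        rw [natDegree_C, zero_add]
        exact le_of_lt ((natDegree_lt_iff_degree_lt h0).mpr hq)
    have heq : q * ((X - C ξ) * P) =
        q * laguerreS (α - 1) (n + 1) + (-(C c * q)) * laguerreS (α - 1) n := by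
      rw [hPR, hRadd]; ring
    have hint : (∫ x in Set.Ioi (0:ℝ),
        q.eval x * P.eval x * (x - ξ) * x ^ (α - 1) * Real.exp (-x)) =
        ∫ x in Set.Ioi (0:ℝ),
          (q * ((X - C ξ) * P)).eval x * x ^ (α - 1) * Real.exp (-x) := by
      apply MeasureTheory.setIntegral_congr_fun measurableSet_Ioi
      intro x _
      simp only [eval_mul, eval_sub, eval_X, eval_C]
      ring
    rw [hint, heq, Iadd]
    rw [I_mul_laguerre α hα (n+1) q hqnd, I_mul_laguerre α hα n (-(C c * q)) hqnd']
    rw [coeff_eq_zero_of_degree_lt hq1]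
    rw [coeff_neg, coeff_C_mul, coeff_eq_zero_of_degree_lt hq]
    simp
  · have heq : P * ((X - C ξ) * P) =
        P * laguerreS (α - 1) (n + 1) + (-(C c * P)) * laguerreS (α - 1) n := by
      rw [hPR, hRadd]; ring
    have hint : (∫ x in Set.Ioi (0:ℝ),
        (P.eval x) ^ 2 * (x - ξ) * x ^ (α - 1) * Real.exp (-x)) =
        ∫ x in Set.Ioi (0:ℝ),
          (P * ((X - C ξ) * P)).eval x * x ^ (α - 1) * Real.exp (-x) := by
      apply MeasureTheory.setIntegral_congr_fun measurableSet_Ioi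
      intro x _
      simp only [eval_mul, eval_sub, eval_X, eval_C]
      ring
    rw [hint, heq, Iadd]
    rw [I_mul_laguerre α hα (n+1) P (by omega), I_mul_laguerre α hα n (-(C c * P)) (by simp [natDegree_neg]; exact le_trans natDegree_mul_le (by simp [hPnd]))]
    rw [coeff_eq_zero_of_natDegree_lt (by omega)]
    rw [coeff_neg, coeff_C_mul]
    have hcoeffP : P.coeff n = 1 := by
      have := hPm
      rw [Monic, leadingCoeff, hPnd] at this
      exact this
    rw [hcoeffP, hc]
    ring
end

section
/- Let α > 0, ξ < 0 and n ≥ 1. Assume L_k^{α-1}(ξ) ≠ 0 for k = n, n+1, n+2 (which holds since all zeros of Laguerre–Sonin polynomials are positive). For k = n and k = n+1 let P_k be the real polynomial satisfying (X - ξ)·P_k(X) = L_{k+1}^{α-1}(X) - (L_{k+1}^{α-1}(ξ)/L_k^{α-1}(ξ))·L_k^{α-1}(X). Then, with σ_n = n(n+α)·L_n^{α-1}(ξ)/L_{n+1}^{α-1}(ξ), the polynomial identity L_n^α(X) = P_{n+1}'(X)/(n+1) - (σ_n/n)·P_n'(X) holds. -/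
open Polynomial MeasureTheory

lemma lag_coeff (β : ℝ) (k j : ℕ) : (laguerreS β k).coeff j =
    if j ≤ k then (-1:ℝ)^k * k.factorial * ((-1:ℝ)^j / j.factorial) *
      (Real.Gamma ((k:ℝ)+β+1) / (Real.Gamma ((j:ℝ)+β+1) * (k-j).factorial)) else 0 := by
  simp only [laguerreS, Polynomial.finset_sum_coeff, Polynomial.coeff_C_mul,
    Polynomial.coeff_X_pow, mul_ite, mul_one, mul_zero, Finset.sum_ite_eq',
    Finset.mem_range, Nat.lt_succ_iff]
  rw [Finset.sum_ite_eq (Finset.range (k+1)) j]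
  simp [Nat.lt_succ_iff]

lemma lag_deriv (β : ℝ) (hβ : -1 < β) (k : ℕ) :
    Polynomial.derivative (laguerreS β (k+1)) = C ((k:ℝ)+1) * laguerreS (β+1) k := by
  ext j
  rw [Polynomial.coeff_derivative, Polynomial.coeff_C_mul, lag_coeff, lag_coeff]
  by_cases hj : j ≤ k
  · rw [if_pos (by omega), if_pos hj]
    have h1 : (k+1) - (j+1) = k - j := by omega
    have h2 : ((j+1 : ℕ) : ℝ) + β + 1 = (j:ℝ) + (β+1) + 1 := by push_cast; ring
    have h3 : ((k+1 : ℕ) : ℝ) + β + 1 = (k:ℝ) + (β+1) + 1 := by push_cast; ring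
    rw [h1, h2, h3, Nat.factorial_succ (j), Nat.factorial_succ k]
    have hjf : (j.factorial : ℝ) ≠ 0 := by exact_mod_cast j.factorial_ne_zero
    have hkjf : ((k-j).factorial : ℝ) ≠ 0 := by exact_mod_cast (k-j).factorial_ne_zero
    have hj1 : ((j:ℝ)+1) ≠ 0 := by positivity
    have hG1 : Real.Gamma ((j:ℝ) + (β+1) + 1) ≠ 0 :=
      ne_of_gt (Real.Gamma_pos_of_pos (by nlinarith [Nat.cast_nonneg (α := ℝ) j]))
    have hG2 : Real.Gamma ((k:ℝ) + (β+1) + 1) ≠ 0 :=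
      ne_of_gt (Real.Gamma_pos_of_pos (by nlinarith [Nat.cast_nonneg (α := ℝ) k]))
    push_cast
    field_simp
    ring
  · rw [if_neg (by omega), if_neg hj, zero_mul, mul_zero]

lemma lag_S (β : ℝ) (hβ : -1 < β) (k : ℕ) :
    laguerreS β (k+1) = laguerreS (β+1) (k+1) + C ((k:ℝ)+1) * laguerreS (β+1) k := by
  have hkb : (0:ℝ) < (k:ℝ) + β + 2 := by nlinarith [Nat.cast_nonneg (α := ℝ) k]
  ext j
  rw [Polynomial.coeff_add, Polynomial.coeff_C_mul, lag_coeff, lag_coeff, lag_coeff]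
  by_cases hj : j ≤ k+1
  · rw [if_pos hj, if_pos hj]
    have hjb : (0:ℝ) < (j:ℝ) + β + 1 := by nlinarith [Nat.cast_nonneg (α := ℝ) j]
    have e1 : Real.Gamma (((k+1:ℕ):ℝ) + β + 1) = Real.Gamma ((k:ℝ)+β+2) := by
      norm_num [add_assoc, add_comm, add_left_comm]
    have e2 : Real.Gamma (((k+1:ℕ):ℝ) + (β+1) + 1) = ((k:ℝ)+β+2) * Real.Gamma ((k:ℝ)+β+2) := by
      rw [show ((k+1:ℕ):ℝ) + (β+1) + 1 = ((k:ℝ)+β+2)+1 by push_cast; ring,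
        Real.Gamma_add_one (ne_of_gt hkb)]
    have e3 : Real.Gamma ((j:ℝ) + (β+1) + 1) = ((j:ℝ)+β+1) * Real.Gamma ((j:ℝ)+β+1) := by
      rw [show (j:ℝ) + (β+1) + 1 = ((j:ℝ)+β+1)+1 by ring, Real.Gamma_add_one (ne_of_gt hjb)]
    have e4 : Real.Gamma ((k:ℝ) + (β+1) + 1) = Real.Gamma ((k:ℝ)+β+2) := by
      rw [show (k:ℝ) + (β+1) + 1 = (k:ℝ)+β+2 by ring]
    rw [e1, e2, e3, e4, Nat.factorial_succ k]
    have hG1 : Real.Gamma ((j:ℝ)+β+1) ≠ 0 := ne_of_gt (Real.Gamma_pos_of_pos hjb)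
    have hG2 : Real.Gamma ((k:ℝ)+β+2) ≠ 0 := ne_of_gt (Real.Gamma_pos_of_pos hkb)
    have hjf : (j.factorial : ℝ) ≠ 0 := by exact_mod_cast j.factorial_ne_zero
    by_cases hj2 : j ≤ k
    · rw [if_pos hj2]
      have hkjf : ((k-j).factorial : ℝ) ≠ 0 := by exact_mod_cast (k-j).factorial_ne_zero
      have hfs : (((k+1-j).factorial : ℕ) : ℝ) = ((k:ℝ)-(j:ℝ)+1) * ((k-j).factorial : ℝ) := by
        rw [show k+1-j = (k-j)+1 by omega, Nat.factorial_succ]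
        push_cast [Nat.cast_sub hj2]
        ring
      rw [hfs]
      have hkj1 : ((k:ℝ)-(j:ℝ)+1) ≠ 0 := by
        have : (j:ℝ) ≤ (k:ℝ) := by exact_mod_cast hj2
        nlinarith
      push_cast
      field_simp
      ring
    · have hjk : j = k + 1 := by omega
      subst hjk
      rw [if_neg hj2, mul_zero, add_zero, show k+1-(k+1) = 0 by omega, Nat.factorial_zero]
      have hj1 : (((k+1:ℕ)):ℝ) + β + 1 = (k:ℝ)+β+2 := by push_cast; ring
      rw [hj1]
      field_simp
  · rw [if_neg hj, if_neg hj, if_neg (by omega), mul_zero, add_zero]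

set_option maxHeartbeats 2000000 in
lemma lag_rec (β : ℝ) (hβ : -1 < β) (k : ℕ) :
    laguerreS β (k+2) = (X - C (2*(k:ℝ)+β+3)) * laguerreS β (k+1)
      - C (((k:ℝ)+1)*((k:ℝ)+1+β)) * laguerreS β k := by
  have hkb1 : (0:ℝ) < (k:ℝ) + β + 1 := by nlinarith [Nat.cast_nonneg (α := ℝ) k]
  have hkb2 : (0:ℝ) < (k:ℝ) + β + 2 := by linarith
  have eK1 : Real.Gamma (((k+1:ℕ):ℝ) + β + 1) = ((k:ℝ)+β+1) * Real.Gamma ((k:ℝ)+β+1) := by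
    rw [show ((k+1:ℕ):ℝ) + β + 1 = ((k:ℝ)+β+1)+1 by push_cast; ring,
      Real.Gamma_add_one (ne_of_gt hkb1)]
  have eK2 : Real.Gamma (((k+2:ℕ):ℝ) + β + 1)
      = ((k:ℝ)+β+2) * (((k:ℝ)+β+1) * Real.Gamma ((k:ℝ)+β+1)) := by
    rw [show ((k+2:ℕ):ℝ) + β + 1 = ((k:ℝ)+β+2)+1 by push_cast; ring,
      Real.Gamma_add_one (ne_of_gt hkb2),
      show (k:ℝ) + β + 2 = ((k:ℝ)+β+1)+1 by ring,
      Real.Gamma_add_one (ne_of_gt hkb1)]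
  have hGk : Real.Gamma ((k:ℝ)+β+1) ≠ 0 :=
    ne_of_gt (Real.Gamma_pos_of_pos hkb1)
  have hf2 : (((k+2:ℕ).factorial : ℕ) : ℝ) = ((k:ℝ)+2) * (((k:ℝ)+1) * k.factorial) := by
    rw [Nat.factorial_succ (k+1), Nat.factorial_succ k]; push_cast; ring
  have hf1 : (((k+1:ℕ).factorial : ℕ) : ℝ) = ((k:ℝ)+1) * k.factorial := by
    rw [Nat.factorial_succ k]; push_cast; ring
  have hkf : (k.factorial : ℝ) ≠ 0 := by exact_mod_cast k.factorial_ne_zero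
  ext j
  rw [Polynomial.coeff_sub, Polynomial.coeff_C_mul, sub_mul,
    Polynomial.coeff_sub, Polynomial.coeff_C_mul, lag_coeff, lag_coeff, lag_coeff]
  rcases j with _ | i
  · rw [Polynomial.coeff_X_mul_zero]
    rw [if_pos (by omega), if_pos (by omega), if_pos (by omega)]
    simp only [Nat.cast_zero, Nat.sub_zero, pow_zero, Nat.factorial_zero, Nat.cast_one]
    rw [eK1, eK2, hf2, hf1]
    have hGb : Real.Gamma ((0:ℝ)+β+1) ≠ 0 :=
      ne_of_gt (Real.Gamma_pos_of_pos (by linarith))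
    rw [show (0:ℝ)+β+1 = β+1 by ring] at hGb
    field_simp
    ring
  · rw [Polynomial.coeff_X_mul, lag_coeff]
    have hib : (0:ℝ) < (i:ℝ) + β + 1 := by nlinarith [Nat.cast_nonneg (α := ℝ) i]
    have eI1 : Real.Gamma (((i+1:ℕ):ℝ) + β + 1) = ((i:ℝ)+β+1) * Real.Gamma ((i:ℝ)+β+1) := by
      rw [show ((i+1:ℕ):ℝ) + β + 1 = ((i:ℝ)+β+1)+1 by push_cast; ring,
        Real.Gamma_add_one (ne_of_gt hib)]
    have hGi : Real.Gamma ((i:ℝ)+β+1) ≠ 0 := ne_of_gt (Real.Gamma_pos_of_pos hib)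
    have hif : (i.factorial : ℝ) ≠ 0 := by exact_mod_cast i.factorial_ne_zero
    have hgi1 : (((i+1:ℕ).factorial : ℕ) : ℝ) = ((i:ℝ)+1) * i.factorial := by
      rw [Nat.factorial_succ i]; push_cast; ring
    by_cases h1 : i + 1 ≤ k
    · -- interior case
      rw [if_pos (by omega), if_pos (by omega), if_pos (by omega), if_pos (by omega)]
      have d2 : k + 2 - (i+1) = (k - i - 1) + 2 := by omega
      have d1 : k + 1 - (i+1) = (k - i - 1) + 1 := by omega
      have d0 : k + 1 - i = (k - i - 1) + 2 := by omega
      have dk : k - (i+1) = k - i - 1 := by omega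
      have hci : ((k - i - 1 : ℕ) : ℝ) = (k:ℝ) - (i:ℝ) - 1 := by
        have : ((k - i - 1 : ℕ) : ℝ) = ((k - i - 1 : ℕ) : ℝ) := rfl
        rw [Nat.cast_sub (by omega : 1 ≤ k - i), Nat.cast_sub (by omega : i ≤ k)]
        norm_num
      have hdf : ((k - i - 1).factorial : ℝ) ≠ 0 := by
        exact_mod_cast (k - i - 1).factorial_ne_zero
      have e2 : (((k - i - 1) + 2).factorial : ℝ)
          = ((k:ℝ)-(i:ℝ)+1) * (((k:ℝ)-(i:ℝ)) * (k - i - 1).factorial) := by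
        rw [Nat.factorial_succ, Nat.factorial_succ]
        push_cast [hci]; ring
      have e1 : (((k - i - 1) + 1).factorial : ℝ)
          = ((k:ℝ)-(i:ℝ)) * (k - i - 1).factorial := by
        rw [Nat.factorial_succ]; push_cast [hci]; ring
      rw [d2, d1, d0, dk, eI1, eK1, eK2, hf2, hf1, hgi1, e2, e1]
      have hki : ((i:ℝ)) < (k:ℝ) := by exact_mod_cast (by omega : i < k)
      have hki1 : ((k:ℝ)-(i:ℝ)) ≠ 0 := ne_of_gt (by linarith)
      have hki2 : ((k:ℝ)-(i:ℝ)+1) ≠ 0 := ne_of_gt (by linarith)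
      push_cast
      field_simp
      ring
    · by_cases h2 : i + 1 ≤ k + 1
      · -- j = k+1
        have hik : i = k := by omega
        subst hik
        rw [if_pos (by omega), if_pos (by omega), if_pos (by omega), if_neg (by omega)]
        have d2 : i + 2 - (i+1) = 1 := by omega
        have d1 : i + 1 - (i+1) = 0 := by omega
        have d0 : i + 1 - i = 1 := by omega
        rw [d2, d1, d0]
        simp only [Nat.factorial_one, Nat.factorial_zero, Nat.cast_one, mul_zero]
        rw [eI1, eK2, hf2, hf1]
        push_cast
        field_simp
        ring
      · by_cases h3 : i + 1 ≤ k + 2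
        · -- j = k+2
          have hik : i = k + 1 := by omega
          subst hik
          rw [if_pos (by omega), if_pos (by omega), if_neg (by omega), if_neg (by omega)]
          have d2 : k + 2 - (k+1+1) = 0 := by omega
          have d1 : k + 1 - (k+1) = 0 := by omega
          rw [d2, d1]
          simp only [Nat.factorial_zero, Nat.cast_one, mul_zero]
          rw [eK2, eK1, hf2, hf1]
          push_cast
          field_simp
          ring
        · rw [if_neg (by omega), if_neg (by omega), if_neg (by omega), if_neg (by omega)]
          ring

set_option maxHeartbeats 2000000 in
theorem stmt1 (α ξ : ℝ) (hα : 0 < α) (hξ : ξ < 0) (n : ℕ) (hn : 1 ≤ n)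
    (h1 : (laguerreS (α - 1) n).eval ξ ≠ 0)
    (h2 : (laguerreS (α - 1) (n + 1)).eval ξ ≠ 0)
    (h3 : (laguerreS (α - 1) (n + 2)).eval ξ ≠ 0)
    (Pn Pn1 : Polynomial ℝ)
    (hPn : (Polynomial.X - Polynomial.C ξ) * Pn =
      laguerreS (α - 1) (n + 1) -
        Polynomial.C ((laguerreS (α - 1) (n + 1)).eval ξ / (laguerreS (α - 1) n).eval ξ) *
          laguerreS (α - 1) n)
    (hPn1 : (Polynomial.X - Polynomial.C ξ) * Pn1 =
      laguerreS (α - 1) (n + 2) -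
        Polynomial.C ((laguerreS (α - 1) (n + 2)).eval ξ / (laguerreS (α - 1) (n + 1)).eval ξ) *
          laguerreS (α - 1) (n + 1)) :
    laguerreS α n =
      Polynomial.C (1 / ((n : ℝ) + 1)) * Polynomial.derivative Pn1 -
        Polynomial.C (((n : ℝ) * ((n : ℝ) + α) *
            (laguerreS (α - 1) n).eval ξ / (laguerreS (α - 1) (n + 1)).eval ξ) / (n : ℝ)) *
          Polynomial.derivative Pn := by
  obtain ⟨m, rfl⟩ : ∃ m, n = m + 1 := ⟨n - 1, by omega⟩
  have hβ : (-1:ℝ) < α - 1 := by linarith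
  have hβ' : (-1:ℝ) < α := by linarith
  have hα1 : α - 1 + 1 = α := by ring
  simp only [show m+1+1 = m+2 from rfl, show m+1+2 = m+3 from rfl] at h2 h3 hPn hPn1
  push_cast
  set e1 := (laguerreS (α-1) (m+1)).eval ξ with he1
  set e2 := (laguerreS (α-1) (m+2)).eval ξ with he2
  set e3 := (laguerreS (α-1) (m+3)).eval ξ with he3
  set i1v := 1/((m:ℝ)+1+1) with hi1v
  set sv := ((m:ℝ)+1)*((m:ℝ)+1+α)*e1/e2/((m:ℝ)+1) with hsv
  set c1v := e2/e1 with hc1v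
  set c2v := e3/e2 with hc2v
  have hm1 : ((m:ℝ)+1) ≠ 0 := by positivity
  have hm2 : ((m:ℝ)+2) ≠ 0 := by positivity
  -- scalar relations
  have S1r : i1v * ((m:ℝ)+2) = 1 := by
    rw [hi1v]; field_simp; ring
  have S2r : sv * c1v = (m:ℝ)+1+α := by
    rw [hsv, hc1v]; field_simp
  have S3r : c2v + sv*((m:ℝ)+2) = ξ - (2*(m:ℝ)+α+4) := by
    have hev := congrArg (Polynomial.eval ξ) (lag_rec (α-1) hβ (m+1))
    simp only [Polynomial.eval_sub, Polynomial.eval_mul, Polynomial.eval_add,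
      Polynomial.eval_X, Polynomial.eval_C, show m+1+2 = m+3 from rfl] at hev
    rw [← he1, ← he2, ← he3] at hev
    push_cast at hev
    rw [hc2v, hsv]
    field_simp
    linear_combination hev
  -- lifted scalar relations
  have PS1 : (C i1v : Polynomial ℝ) * (C ((m:ℕ):ℝ) + 2) = 1 := by
    have := congrArg (C : ℝ →+* Polynomial ℝ) S1r
    simpa only [map_mul, map_add, map_ofNat, map_one] using this
  have PS2 : (C sv : Polynomial ℝ) * C c1v = C ((m:ℕ):ℝ) + 1 + C α := by
    have := congrArg (C : ℝ →+* Polynomial ℝ) S2r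
    simpa only [map_mul, map_add, map_one] using this
  have PS3 : (C c2v : Polynomial ℝ) + C sv * (C ((m:ℕ):ℝ) + 2) =
      C ξ - (2 * C ((m:ℕ):ℝ) + C α + 4) := by
    have := congrArg (C : ℝ →+* Polynomial ℝ) S3r
    simpa only [map_mul, map_add, map_sub, map_ofNat, map_one] using this
  -- structural relations
  have hS1 := lag_S (α-1) hβ m
  rw [hα1] at hS1
  have hS2 := lag_S (α-1) hβ (m+1)
  rw [hα1, show m+1+1 = m+2 from rfl] at hS2
  push_cast at hS2
  have hS3 := lag_S (α-1) hβ (m+2)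
  rw [hα1, show m+2+1 = m+3 from rfl] at hS3
  push_cast at hS3
  have hRec0 := lag_rec α hβ' m
  have hRec1 := lag_rec α hβ' (m+1)
  rw [show m+1+2 = m+3 from rfl, show m+1+1 = m+2 from rfl] at hRec1
  push_cast at hRec1
  -- derivative relations
  have hDA1 := lag_deriv (α-1) hβ m
  rw [hα1] at hDA1
  have hDA2 := lag_deriv (α-1) hβ (m+1)
  rw [hα1, show m+1+1 = m+2 from rfl] at hDA2
  push_cast at hDA2
  have hDA3 := lag_deriv (α-1) hβ (m+2)
  rw [hα1, show m+2+1 = m+3 from rfl] at hDA3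
  push_cast at hDA3
  have hH1 := congrArg Polynomial.derivative hPn
  rw [Polynomial.derivative_mul, Polynomial.derivative_sub, Polynomial.derivative_sub,
    Polynomial.derivative_mul, Polynomial.derivative_X, Polynomial.derivative_C,
    hDA1, hDA2] at hH1
  have hH2 := congrArg Polynomial.derivative hPn1
  rw [Polynomial.derivative_mul, Polynomial.derivative_sub, Polynomial.derivative_sub,
    Polynomial.derivative_mul, Polynomial.derivative_X, Polynomial.derivative_C,
    hDA2, hDA3] at hH2
  -- distribute C over the constants everywhere
  simp only [map_add, map_mul, map_sub, map_ofNat, map_one, sub_zero, zero_mul,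
    one_mul, Polynomial.derivative_C, zero_add, add_zero] at hS1 hS2 hS3 hRec0 hRec1 hH1 hH2
  have hZ2 : ((X : Polynomial ℝ) - C ξ)^2 ≠ 0 :=
    pow_ne_zero _ (Polynomial.X_sub_C_ne_zero ξ)
  refine mul_left_cancel₀ hZ2 ?_
  linear_combination (norm := ring_nf)
      (C ξ * C i1v + (-1) * (X : Polynomial ℝ) * C i1v) * hH2 +
      ((-1) * C ξ * C sv + (X : Polynomial ℝ) * C sv) * hH1 +
      (C i1v) * hPn1 +
      ((-1) * C sv) * hPn +
      (C i1v) * hS3 +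
      ((-1) * C sv + (-1) * C c2v * C i1v) * hS2 +
      (C c1v * C sv) * hS1 +
      (C i1v) * hRec1 +
      ((-2) * C i1v + (-1) * C sv + (-1) * C c2v * C i1v + 3 * C ξ * C i1v + (-1) * C α * C i1v + (-1) * C ((m:ℕ):ℝ) * C i1v + C ((m:ℕ):ℝ) * C ξ * C i1v + (-2) * (X : Polynomial ℝ) * C i1v + (-1) * (X : Polynomial ℝ) * C ((m:ℕ):ℝ) * C i1v) * hRec0 +
      (laguerreS α m * C i1v + laguerreS α m * C α * C i1v + 2 * laguerreS α m * C ((m:ℕ):ℝ) * C i1v + laguerreS α m * C ((m:ℕ):ℝ) * C α * C i1v + laguerreS α m * C ((m:ℕ):ℝ) * C ((m:ℕ):ℝ) * C i1v + laguerreS α (m+1) * C i1v + (-2) * laguerreS α (m+1) * C ξ * C i1v + laguerreS α (m+1) * C α * C i1v + laguerreS α (m+1) * C ((m:ℕ):ℝ) * C i1v + (-1) * laguerreS α (m+1) * C ((m:ℕ):ℝ) * C ξ * C i1v + (X : Polynomial ℝ) * laguerreS α (m+1) * C i1v + (X : Polynomial ℝ) * laguerreS α (m+1) * C ((m:ℕ):ℝ)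 * C i1v) * PS3 +
      (laguerreS α m + laguerreS α m * C ξ + laguerreS α m * C ((m:ℕ):ℝ) + laguerreS α m * C ((m:ℕ):ℝ) * C ξ + laguerreS α (m+1) + (-1) * (X : Polynomial ℝ) * laguerreS α m + (-1) * (X : Polynomial ℝ) * laguerreS α m * C ((m:ℕ):ℝ)) * PS2 +
      ((-1) * laguerreS α m + (-1) * laguerreS α m * C sv + (-1) * laguerreS α m * C ξ + (-1) * laguerreS α m * C α + (-1) * laguerreS α m * C α * C sv + (-1) * laguerreS α m * C α * C ξ + (-2) * laguerreS α m * C ((m:ℕ):ℝ) + (-2) * laguerreS α m * C ((m:ℕ):ℝ) * C sv + (-2) * laguerreS α m * C ((m:ℕ):ℝ) * C ξ + (-1) * laguerreS α m * C ((m:ℕ):ℝ) * C α + (-1) * laguerreS α m * C ((m:ℕ):ℝ) * C α * C sv + (-1) * laguerreS α m * C ((m:ℕ):ℝ) * C α * C ξ + (-1) * laguerreS α m * C ((m:ℕ):ℝ) * C ((m:ℕ):ℝ) + (-1) * laguerreS α m * C ((m:ℕ):ℝ) * C ((m:ℕ):ℝ) * C sv + (-1) * laguerreS α m * C ((m:ℕ):ℝ)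 * C ((m:ℕ):ℝ) * C ξ + (-1) * laguerreS α (m+1) + (-1) * laguerreS α (m+1) * C sv + 2 * laguerreS α (m+1) * C ξ * C sv + (-1) * laguerreS α (m+1) * C ξ * C ξ + (-1) * laguerreS α (m+1) * C α + (-1) * laguerreS α (m+1) * C α * C sv + (-1) * laguerreS α (m+1) * C ((m:ℕ):ℝ) + (-1) * laguerreS α (m+1) * C ((m:ℕ):ℝ) * C sv + laguerreS α (m+1) * C ((m:ℕ):ℝ) * C ξ * C sv + (X : Polynomial ℝ) * laguerreS α m + (X : Polynomial ℝ) * laguerreS α m * C α + 2 * (X : Polynomial ℝ) * laguerreS α m * C ((m:ℕ):ℝ) + (X : Polynomial ℝ) * laguerreS α m * C ((m:ℕ):ℝ) * C α + (X : Polynomial ℝ) * laguerreS α m * C ((m:ℕ):ℝ) * C ((m:ℕ):ℝ) + (-1) * (X : Polynomial ℝ) * laguerreS α (m+1) * C sv + 2 * (X : Polynomial ℝ) * laguerreS α (m+1) * C ξ + (-1) * (X : Polynomial ℝ) * laguerreS α (m+1) * C ((m:ℕ):ℝ) * C sv + (-1) * (X : Polynomial ℝ) * (X : Polynomial ℝ)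 * laguerreS α (m+1)) * PS1
end

section
/- Let M ≥ 0 and n ≥ 1. Define P_n(x, M) = L_n(x) + ∑_{j=0}^{n-1} (-1)^{n+1+j}·(n!·M/(j!·(nM+1)))·L_j(x). Then for every real polynomial q of degree at most n-1, ∫_0^∞ q(x)·P_n(x, M)·e^{-x} dx + M·q(0)·P_n(0, M) = 0. -/
open Polynomial MeasureTheory

/-- The polynomial `P_n(x, M) = L_n(x) + ∑_{j<n} (-1)^{n+1+j}·(n!·M/(j!·(nM+1)))·L_j(x)`. -/
noncomputable def Pm (M : ℝ) (n : ℕ) : Polynomial ℝ :=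
  laguerreS 0 n + ∑ j ∈ Finset.range n,
    Polynomial.C ((-1 : ℝ) ^ (n + 1 + j) *
      ((n.factorial : ℝ) * M / ((j.factorial : ℝ) * ((n : ℝ) * M + 1)))) * laguerreS 0 j


open Finset




lemma pow_exp_eq (m : ℕ) : (fun x : ℝ => x ^ m * Real.exp (-x))
    = fun x : ℝ => Real.exp (-x) * x ^ (((m:ℝ)+1) - 1) := by
  funext x
  rw [show ((m:ℝ)+1) - 1 = (m:ℝ) by ring, Real.rpow_natCast]
  ring

lemma integrableOn_pow_exp (m : ℕ) :
    IntegrableOn (fun x : ℝ => x ^ m * Real.exp (-x)) (Set.Ioi 0) := by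
  rw [pow_exp_eq]
  exact Real.GammaIntegral_convergent (by positivity)

lemma moment (m : ℕ) :
    ∫ x in Set.Ioi (0:ℝ), x ^ m * Real.exp (-x) = (m.factorial : ℝ) := by
  have h : ∫ x in Set.Ioi (0:ℝ), x ^ m * Real.exp (-x)
      = ∫ x in Set.Ioi (0:ℝ), Real.exp (-x) * x ^ (((m:ℝ)+1) - 1) := by
    rw [pow_exp_eq]
  rw [h, ← Real.Gamma_eq_integral (by positivity)]
  exact_mod_cast Real.Gamma_nat_eq_factorial m

lemma integrableOn_poly_exp (p : Polynomial ℝ) :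
    IntegrableOn (fun x : ℝ => p.eval x * Real.exp (-x)) (Set.Ioi 0) := by
  have h : (fun x : ℝ => p.eval x * Real.exp (-x))
      = fun x : ℝ => ∑ m ∈ range (p.natDegree + 1), p.coeff m * (x ^ m * Real.exp (-x)) := by
    funext x
    rw [Polynomial.eval_eq_sum_range, Finset.sum_mul]
    exact Finset.sum_congr rfl fun m _ => by ring
  rw [h]
  exact integrable_finset_sum _ fun m _ => (integrableOn_pow_exp m).const_mul _



lemma comb_aux (j : ℕ) : ∀ k r : ℕ,
    ∑ m ∈ range (j+1), (-1:ℤ)^m * (j.choose m) * ((r+m).choose k)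
      = (-1:ℤ)^j * (if j ≤ k then ((r.choose (k-j)) : ℤ) else 0) := by
  induction j with
  | zero => intro k r; simp
  | succ j ih =>
    intro k r
    have h1 : ∑ m ∈ range (j+1+1), (-1:ℤ)^m * ((j+1).choose m) * ((r+m).choose k)
        = (∑ i ∈ range (j+1), (-1:ℤ)^(i+1) * ((j+1).choose (i+1)) * ((r+(i+1)).choose k))
          + ((r.choose k) : ℤ) := by
      rw [Finset.sum_range_succ' (fun m => (-1:ℤ)^m * ((j+1).choose m) * ((r+m).choose k)) (j+1)]
      simp
    have h2 : ∀ i, (-1:ℤ)^(i+1) * ((j+1).choose (i+1)) * ((r+(i+1)).choose k)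
        = -((-1:ℤ)^i * (j.choose i) * (((r+1)+i).choose k))
          - ((-1:ℤ)^i * (j.choose (i+1)) * ((r+(i+1)).choose k)) := by
      intro i
      rw [Nat.choose_succ_succ]
      push_cast
      have : r + (i+1) = (r+1) + i := by ring
      rw [this]
      ring
    have h4 : ∑ i ∈ range j, ((-1:ℤ)^(i+1) * (j.choose (i+1)) * ((r+(i+1)).choose k))
        = - ∑ i ∈ range j, ((-1:ℤ)^i * (j.choose (i+1)) * ((r+(i+1)).choose k)) := by
      rw [← Finset.sum_neg_distrib]
      exact Finset.sum_congr rfl fun i _ => by ring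
    have h5 := Finset.sum_range_succ' (fun m => (-1:ℤ)^m * (j.choose m) * ((r+m).choose k)) j
    have h3 : ∑ i ∈ range (j+1), (-1:ℤ)^i * (j.choose (i+1)) * ((r+(i+1)).choose k)
        = (r.choose k : ℤ) - ∑ m ∈ range (j+1), (-1:ℤ)^m * (j.choose m) * ((r+m).choose k) := by
      rw [Finset.sum_range_succ]
      simp only [Nat.choose_succ_self, Nat.cast_zero, mul_zero, zero_mul, add_zero, h5, h4,
        Nat.choose_zero_right, Nat.cast_one]
      push_cast
      ring
    rw [h1]
    simp only [h2]
    rw [Finset.sum_sub_distrib, Finset.sum_neg_distrib, h3, ih, ih]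
    by_cases hjk : j + 1 ≤ k
    · have hj : j ≤ k := by omega
      have hk : k - j = (k - (j+1)) + 1 := by omega
      simp only [hjk, hj, if_true, hk, Nat.choose_succ_succ]
      push_cast
      ring
    · by_cases hj : j ≤ k
      · have : k - j = 0 := by omega
        simp [hjk, hj, this]
        ring
      · simp [hjk, hj]

lemma comb_aux_real (j k : ℕ) :
    ∑ m ∈ range (j+1), (-1:ℝ)^m * (j.choose m) * ((k+m).choose k)
      = (-1:ℝ)^j * (if j ≤ k then ((k.choose (k-j)) : ℝ) else 0) := by
  have h : ((∑ m ∈ range (j+1), (-1:ℤ)^m * (j.choose m) * ((k+m).choose k) : ℤ) : ℝ)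
      = (((-1:ℤ)^j * (if j ≤ k then ((k.choose (k-j)) : ℤ) else 0) : ℤ) : ℝ) := by
    exact_mod_cast congrArg (fun z : ℤ => (z : ℝ)) (comb_aux j k k)
  push_cast at h
  by_cases hjk : j ≤ k <;> simp [hjk] at h ⊢ <;> exact_mod_cast h

lemma laguerre_eval (j : ℕ) (x : ℝ) :
    (laguerreS 0 j).eval x = ∑ m ∈ range (j+1),
      ((-1 : ℝ) ^ j * j.factorial * ((-1 : ℝ) ^ m / m.factorial) *
      (Real.Gamma ((j : ℝ) + 0 + 1) /
        (Real.Gamma ((m : ℝ) + 0 + 1) * (j - m).factorial))) * x ^ m := by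
  simp [laguerreS, eval_finset_sum]

lemma gamma_fact (m : ℕ) : Real.Gamma ((m : ℝ) + 0 + 1) = (m.factorial : ℝ) := by
  rw [show (m:ℝ)+0+1 = (m:ℝ)+1 by ring]
  exact_mod_cast Real.Gamma_nat_eq_factorial m

lemma laguerre_moment (k j : ℕ) :
    ∫ x in Set.Ioi (0:ℝ), x ^ k * (laguerreS 0 j).eval x * Real.exp (-x)
      = (k.factorial : ℝ) * j.factorial * (k.choose j) := by
  have hfun : (fun x : ℝ => x ^ k * (laguerreS 0 j).eval x * Real.exp (-x))
      = fun x : ℝ => ∑ m ∈ range (j+1),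
          ((-1 : ℝ) ^ j * j.factorial * ((-1 : ℝ) ^ m / m.factorial) *
            (Real.Gamma ((j : ℝ) + 0 + 1) /
              (Real.Gamma ((m : ℝ) + 0 + 1) * (j - m).factorial))) *
          (x ^ (k + m) * Real.exp (-x)) := by
    funext x
    rw [laguerre_eval, mul_comm (x^k), Finset.sum_mul, Finset.sum_mul]
    exact Finset.sum_congr rfl fun m _ => by rw [pow_add]; ring
  rw [hfun, integral_finset_sum _ (fun m _ => ((integrableOn_pow_exp (k+m)).const_mul _))]
  simp_rw [integral_const_mul, moment]
  have hterm : ∀ m ∈ range (j+1),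
      ((-1 : ℝ) ^ j * j.factorial * ((-1 : ℝ) ^ m / m.factorial) *
        (Real.Gamma ((j : ℝ) + 0 + 1) /
          (Real.Gamma ((m : ℝ) + 0 + 1) * (j - m).factorial))) * ((k+m).factorial : ℝ)
      = ((j.factorial : ℝ) * k.factorial) * ((-1:ℝ)^j *
          ((-1:ℝ)^m * (j.choose m) * ((k+m).choose k))) := by
    intro m hm
    have hmj : m ≤ j := Nat.lt_succ_iff.mp (Finset.mem_range.mp hm)
    rw [gamma_fact j, gamma_fact m]
    have c1 : ((j.choose m : ℝ)) = (j.factorial : ℝ) / ((m.factorial : ℝ) * ((j-m).factorial : ℝ)) :=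
      Nat.cast_choose ℝ hmj
    have c2 : (((k+m).choose k : ℝ)) = (((k+m).factorial : ℝ)) / ((k.factorial : ℝ) * (m.factorial : ℝ)) := by
      rw [Nat.cast_choose ℝ (Nat.le_add_right k m)]
      simp
    rw [c1, c2]
    have f1 : (m.factorial : ℝ) ≠ 0 := Nat.cast_ne_zero.mpr m.factorial_ne_zero
    have f2 : ((j-m).factorial : ℝ) ≠ 0 := Nat.cast_ne_zero.mpr (j-m).factorial_ne_zero
    have f3 : (k.factorial : ℝ) ≠ 0 := Nat.cast_ne_zero.mpr k.factorial_ne_zero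
    field_simp
  rw [Finset.sum_congr rfl hterm, ← Finset.mul_sum, ← Finset.mul_sum, comb_aux_real]
  by_cases hjk : j ≤ k
  · simp only [hjk, if_true]
    rw [← Nat.choose_symm hjk]
    ring_nf
    rw [show ((-1:ℝ))^(j*2) = 1 by rw [mul_comm, pow_mul]; norm_num]
    ring
  · simp [hjk, Nat.choose_eq_zero_of_lt (by omega : k < j)]


lemma integrableOn_pow_poly_exp (k : ℕ) (p : Polynomial ℝ) :
    IntegrableOn (fun x : ℝ => x^k * p.eval x * Real.exp (-x)) (Set.Ioi 0) := by
  have he : (fun x : ℝ => x^k * p.eval x * Real.exp (-x))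
      = fun x : ℝ => ((X^k * p : Polynomial ℝ).eval x * Real.exp (-x)) := by
    funext x; simp [eval_mul]
  rw [he]; exact integrableOn_poly_exp _

lemma laguerre_zero (j : ℕ) : (laguerreS 0 j).eval 0 = (-1:ℝ)^j * j.factorial := by
  have fj : (j.factorial : ℝ) ≠ 0 := Nat.cast_ne_zero.mpr j.factorial_ne_zero
  rw [laguerre_eval, Finset.sum_eq_single 0]
  · rw [gamma_fact j, gamma_fact 0, Nat.sub_zero]
    norm_num
    field_simp
  · intro m _ hm0; simp [zero_pow hm0]
  · intro h; simp at h

lemma neg_one_pow_aux (n j : ℕ) : (-1:ℝ)^(n+1+j) * (-1:ℝ)^j = -(-1:ℝ)^n := by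
  rw [← pow_add, show n+1+j+j = n + 1 + 2*j by ring, pow_add, pow_add, pow_mul]
  norm_num

lemma Pm_zero (M : ℝ) (n : ℕ) (hden : (n:ℝ)*M+1 ≠ 0) :
    (Pm M n).eval 0 = (-1:ℝ)^n * n.factorial / ((n:ℝ)*M+1) := by
  have hterm : ∀ j ∈ range n,
      ((-1:ℝ)^(n+1+j) * ((n.factorial:ℝ) * M / ((j.factorial:ℝ) * ((n:ℝ)*M+1))))
        * (laguerreS 0 j).eval 0
      = -((-1:ℝ)^n * (n.factorial:ℝ) * M / ((n:ℝ)*M+1)) := by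
    intro j _
    have fj : (j.factorial : ℝ) ≠ 0 := Nat.cast_ne_zero.mpr j.factorial_ne_zero
    have h2j : (-1:ℝ)^(j*2) = 1 := by rw [mul_comm, pow_mul]; norm_num
    rw [laguerre_zero]
    have e : (-1:ℝ)^(n+1+j) * ((n.factorial:ℝ) * M / ((j.factorial:ℝ) * ((n:ℝ)*M+1))) * ((-1:ℝ)^j * j.factorial)
        = ((-1:ℝ)^(n+1+j) * (-1:ℝ)^j) * ((n.factorial:ℝ) * M / ((n:ℝ)*M+1)) := by
      field_simp
    rw [e, neg_one_pow_aux]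
    ring
  simp only [Pm, eval_add, eval_finset_sum, eval_mul, eval_C]
  rw [Finset.sum_congr rfl hterm, Finset.sum_const, card_range, laguerre_zero, nsmul_eq_mul]
  field_simp
  ring

lemma alt_sum_choose (n k : ℕ) (hk : k < n) :
    ∑ j ∈ range n, (-1:ℝ)^j * (k.choose j) = if k = 0 then 1 else 0 := by
  have h1 : ∑ j ∈ range n, (-1:ℝ)^j * (k.choose j)
      = ∑ j ∈ range (k+1), (-1:ℝ)^j * (k.choose j) := by
    symm
    apply Finset.sum_subset (Finset.range_subset_range.mpr (by omega))
    intro x hx hnx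
    have hkx : k < x := by simp only [mem_range] at hx hnx; omega
    simp [Nat.choose_eq_zero_of_lt hkx]
  rw [h1]
  rcases Nat.eq_zero_or_pos k with hk0|hk0
  · subst hk0; simp
  · have hk0' : k ≠ 0 := by omega
    have h2 := Int.alternating_sum_range_choose_of_ne hk0'
    rw [if_neg hk0']
    calc ∑ j ∈ range (k+1), (-1:ℝ)^j * (k.choose j)
        = ((∑ m ∈ range (k + 1), ((-1) ^ m * k.choose m : ℤ) : ℤ) : ℝ) := by push_cast; rfl
      _ = 0 := by rw [h2]; simp

lemma key_lemma (M : ℝ) (hM : 0 ≤ M) (n : ℕ) (hn : 1 ≤ n) (k : ℕ) (hk : k < n) :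
    (∫ x in Set.Ioi (0:ℝ), x^k * (Pm M n).eval x * Real.exp (-x))
      + M * ((0:ℝ)^k * (Pm M n).eval 0) = 0 := by
  have hden : (n:ℝ)*M+1 ≠ 0 := by positivity
  have hfun : (fun x : ℝ => x^k * (Pm M n).eval x * Real.exp (-x))
      = fun x : ℝ => (x^k * (laguerreS 0 n).eval x * Real.exp (-x))
        + ∑ j ∈ range n, ((-1:ℝ)^(n+1+j) * ((n.factorial:ℝ) * M / ((j.factorial:ℝ) * ((n:ℝ)*M+1))))
            * (x^k * (laguerreS 0 j).eval x * Real.exp (-x)) := by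
    funext x
    simp only [Pm, eval_add, eval_finset_sum, eval_mul, eval_C]
    rw [mul_add, add_mul]
    congr 1
    rw [Finset.mul_sum, Finset.sum_mul]
    exact Finset.sum_congr rfl fun j _ => by ring
  rw [hfun, MeasureTheory.integral_add (integrableOn_pow_poly_exp k _)
    (integrable_finset_sum _ fun j _ => (integrableOn_pow_poly_exp k _).const_mul _),
    integral_finset_sum _ fun j _ => ((integrableOn_pow_poly_exp k _).const_mul _)]
  simp_rw [integral_const_mul, laguerre_moment]
  have hterm : ∀ j ∈ range n,
      ((-1:ℝ)^(n+1+j) * ((n.factorial:ℝ) * M / ((j.factorial:ℝ) * ((n:ℝ)*M+1))))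
        * ((k.factorial:ℝ) * (j.factorial:ℝ) * (k.choose j))
      = (-((-1:ℝ)^n) * ((n.factorial:ℝ) * M * (k.factorial:ℝ) / ((n:ℝ)*M+1)))
          * ((-1:ℝ)^j * (k.choose j)) := by
    intro j _
    have fj : (j.factorial : ℝ) ≠ 0 := Nat.cast_ne_zero.mpr j.factorial_ne_zero
    have h2j : (-1:ℝ)^(j*2) = 1 := by rw [mul_comm, pow_mul]; norm_num
    field_simp
    linear_combination ((n.factorial:ℝ) * M * (k.factorial:ℝ) * (k.choose j) * (j.factorial:ℝ))
      * neg_one_pow_aux n j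
      + ((n.factorial:ℝ) * M * (k.factorial:ℝ) * (j.factorial:ℝ) * ((k.choose j):ℝ) * (-1:ℝ) ^ n) * h2j
  rw [Finset.sum_congr rfl hterm, ← Finset.mul_sum, alt_sum_choose n k hk,
    Pm_zero M n hden, Nat.choose_eq_zero_of_lt hk]
  by_cases hk0 : k = 0
  · subst hk0
    simp only [if_pos rfl, pow_zero, one_mul, Nat.cast_zero, mul_zero, zero_add, mul_one,
      Nat.factorial_zero, Nat.cast_one]
    field_simp
    rw [if_pos trivial]
    ring
  · simp [hk0, zero_pow hk0]

theorem stmt4 (M : ℝ) (hM : 0 ≤ M) (n : ℕ) (hn : 1 ≤ n) :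
    ∀ q : Polynomial ℝ, q.degree < n →
      (∫ x in Set.Ioi (0 : ℝ), q.eval x * (Pm M n).eval x * Real.exp (-x)) +
        M * (q.eval 0 * (Pm M n).eval 0) = 0 := by
  intro q hq
  have hnd : q.natDegree < n := by
    rcases eq_or_ne q 0 with h0|h0
    · simp [h0]; omega
    · exact (Polynomial.natDegree_lt_iff_degree_lt h0).mpr hq
  have hev : ∀ x : ℝ, q.eval x = ∑ k ∈ range n, q.coeff k * x^k :=
    fun x => Polynomial.eval_eq_sum_range' hnd x
  have hfun : (fun x : ℝ => q.eval x * (Pm M n).eval x * Real.exp (-x))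
      = fun x : ℝ => ∑ k ∈ range n, q.coeff k * (x^k * (Pm M n).eval x * Real.exp (-x)) := by
    funext x
    rw [hev x, Finset.sum_mul, Finset.sum_mul]
    exact Finset.sum_congr rfl fun k _ => by ring
  rw [hfun, integral_finset_sum _ (fun k _ => ((integrableOn_pow_poly_exp k _).const_mul _))]
  simp_rw [integral_const_mul]
  rw [hev 0, Finset.sum_mul, Finset.mul_sum, ← Finset.sum_add_distrib]
  apply Finset.sum_eq_zero
  intro k hk
  have hkey := key_lemma M hM n hn k (Finset.mem_range.mp hk)
  linear_combination (q.coeff k) * hkey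
end

section
/- For all natural numbers i and j with i ≥ j, ∫_0^∞ x^i·L_j(x)·e^{-x} dx = i!·j!·C(i,j), where C(i,j) is the binomial coefficient. -/
open Polynomial MeasureTheory

lemma key (j : ℕ) : ∀ i a : ℕ, j ≤ i →
    ∑ m ∈ Finset.range (j + 1),
        (-1 : ℝ) ^ (j + m) * (j.choose m) * ((m + i + a).choose i)
      = ((i + a).choose (i - j)) := by
  induction j with
  | zero => intro i a _; simp
  | succ j IH =>
    intro i a h
    have hj : j ≤ i := Nat.le_of_succ_le h
    rw [Finset.sum_range_succ']
    have hP : ∀ m : ℕ, ((j + 1).choose (m + 1) : ℝ) = j.choose m + j.choose (m + 1) := by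
      intro m; exact_mod_cast congrArg (Nat.cast : ℕ → ℝ) (Nat.choose_succ_succ j m)
    have e1 : ∑ m ∈ Finset.range (j + 1),
        (-1 : ℝ) ^ (j + 1 + (m + 1)) * ((j + 1).choose (m + 1)) * ((m + 1 + i + a).choose i)
        = (∑ m ∈ Finset.range (j + 1),
            (-1 : ℝ) ^ (j + m) * (j.choose m) * ((m + i + (a + 1)).choose i))
          + ∑ m ∈ Finset.range (j + 1),
            (-1 : ℝ) ^ (j + m) * (j.choose (m + 1)) * ((m + i + (a + 1)).choose i) := by
      rw [← Finset.sum_add_distrib]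
      refine Finset.sum_congr rfl fun m _ => ?_
      rw [hP m]
      have : m + 1 + i + a = m + i + (a + 1) := by omega
      rw [this]
      have : (-1 : ℝ) ^ (j + 1 + (m + 1)) = (-1 : ℝ) ^ (j + m) := by
        rw [show j + 1 + (m + 1) = j + m + 2 by omega, pow_add]; norm_num
      rw [this]; ring
    have hR : ∑ m ∈ Finset.range (j + 1),
        (-1 : ℝ) ^ (j + m) * (j.choose (m + 1)) * ((m + i + (a + 1)).choose i)
        = (-1 : ℝ) ^ j * ((i + a).choose i)
          - ∑ m ∈ Finset.range (j + 1),
            (-1 : ℝ) ^ (j + m) * (j.choose m) * ((m + i + a).choose i) := by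
      rw [Finset.sum_range_succ]  -- drop top term of LHS
      rw [Finset.sum_range_succ' (fun m => (-1 : ℝ) ^ (j + m) * (j.choose m) * ((m + i + a).choose i))]
      simp only [Nat.choose_succ_self, Nat.cast_zero, mul_zero, zero_mul, add_zero,
        Nat.choose_zero_right, Nat.cast_one, pow_zero, Nat.zero_add, zero_add]
      have : ∀ m : ℕ, (-1 : ℝ) ^ (j + (m + 1)) = -(-1 : ℝ) ^ (j + m) := by
        intro m; rw [show j + (m + 1) = j + m + 1 by omega, pow_succ]; ring
      simp only [this]
      have : ∀ m : ℕ, m + 1 + i + a = m + i + (a + 1) := by intro m; omega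
      simp only [this]
      simp only [neg_mul, Finset.sum_neg_distrib]
      ring
    rw [e1, hR, IH i (a + 1) hj, IH i a hj]
    have hs : i - j = i - (j + 1) + 1 := by omega
    have : ((i + (a + 1)).choose (i - j) : ℝ)
        = (i + a).choose (i - (j + 1)) + (i + a).choose (i - j) := by
      rw [show i + (a + 1) = i + a + 1 by omega, hs]
      exact_mod_cast congrArg (Nat.cast : ℕ → ℝ) (Nat.choose_succ_succ (i + a) (i - (j + 1)))
    rw [this]
    have hpow : (-1 : ℝ) ^ (j + 1 + 0) = -(-1 : ℝ) ^ j := by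
      rw [add_zero, pow_succ]; ring
    rw [hpow, hs]
    push_cast
    ring_nf
    rw [show 1 + j = j + 1 by omega, Nat.choose_zero_right]
    push_cast
    ring

lemma integrableOn_pow_mul_exp (n : ℕ) :
    IntegrableOn (fun x : ℝ => x ^ n * Real.exp (-x)) (Set.Ioi 0) := by
  have h := Real.GammaIntegral_convergent (s := (n : ℝ) + 1) (by positivity)
  refine h.congr_fun (fun x hx => ?_) measurableSet_Ioi
  have hx0 : (0 : ℝ) < x := hx
  dsimp only
  rw [add_sub_cancel_right, Real.rpow_natCast]
  ring

lemma integral_pow_mul_exp (n : ℕ) :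
    ∫ x in Set.Ioi (0 : ℝ), x ^ n * Real.exp (-x) = n.factorial := by
  have h1 : Real.Gamma ((n : ℝ) + 1) = ∫ x in Set.Ioi (0 : ℝ),
      Real.exp (-x) * x ^ ((n : ℝ) + 1 - 1) := Real.Gamma_eq_integral (by positivity)
  have h2 : ∫ x in Set.Ioi (0 : ℝ), Real.exp (-x) * x ^ ((n : ℝ) + 1 - 1)
      = ∫ x in Set.Ioi (0 : ℝ), x ^ n * Real.exp (-x) := by
    refine setIntegral_congr_fun measurableSet_Ioi fun x hx => ?_
    have hx0 : (0 : ℝ) < x := hx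
    rw [add_sub_cancel_right, Real.rpow_natCast]
    ring
  rw [← h2, ← h1]
  exact_mod_cast Real.Gamma_nat_eq_factorial n

lemma term_eq (i j m : ℕ) (hm : m ≤ j) :
    ((-1 : ℝ) ^ j * j.factorial * ((-1 : ℝ) ^ m / m.factorial) *
        (j.factorial / (m.factorial * (j - m).factorial))) * (i + m).factorial
      = (i.factorial * j.factorial) *
        ((-1 : ℝ) ^ (j + m) * (j.choose m) * ((m + i + 0).choose i)) := by
  have h1 : ((j.choose m : ℝ)) * m.factorial * (j - m).factorial = j.factorial := by
    exact_mod_cast congrArg (Nat.cast : ℕ → ℝ) (Nat.choose_mul_factorial_mul_factorial hm)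
  have h2 : (((m + i).choose i : ℝ)) * i.factorial * m.factorial = (m + i).factorial := by
    have := Nat.choose_mul_factorial_mul_factorial (Nat.le_add_left i m)
    rw [Nat.add_sub_cancel] at this
    exact_mod_cast congrArg (Nat.cast : ℕ → ℝ) this
  have hm1 : (m.factorial : ℝ) ≠ 0 := by positivity
  have hm2 : ((j - m).factorial : ℝ) ≠ 0 := by positivity
  have hi1 : (i.factorial : ℝ) ≠ 0 := by positivity
  have hc1 : (j.choose m : ℝ) = j.factorial / (m.factorial * (j - m).factorial) := by
    rw [eq_div_iff (by positivity)]; linear_combination h1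
  have hc2 : ((m + i).choose i : ℝ) = (m + i).factorial / (i.factorial * m.factorial) := by
    rw [eq_div_iff (by positivity)]; linear_combination h2
  rw [add_zero, show i + m = m + i by omega, pow_add, hc1, hc2]
  field_simp

theorem stmt6 (i j : ℕ) (h : j ≤ i) :
    ∫ x in Set.Ioi (0 : ℝ), x ^ i * (laguerreS 0 j).eval x * Real.exp (-x) =
      (i.factorial : ℝ) * (j.factorial : ℝ) * (i.choose j : ℝ) := by
  have heval : ∀ x : ℝ, x ^ i * (laguerreS 0 j).eval x * Real.exp (-x)
      = ∑ m ∈ Finset.range (j + 1),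
          ((-1 : ℝ) ^ j * j.factorial * ((-1 : ℝ) ^ m / m.factorial) *
            (j.factorial / (m.factorial * (j - m).factorial))) *
          (x ^ (i + m) * Real.exp (-x)) := by
    intro x
    simp only [laguerreS, eval_finset_sum, eval_mul, eval_C, eval_pow, eval_X, add_zero]
    rw [Finset.mul_sum, Finset.sum_mul]
    refine Finset.sum_congr rfl fun m _ => ?_
    rw [show ((j : ℝ) + 1) = ((j : ℕ) : ℝ) + 1 by norm_num, Real.Gamma_nat_eq_factorial,
      show ((m : ℝ) + 1) = ((m : ℕ) : ℝ) + 1 by norm_num, Real.Gamma_nat_eq_factorial,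
      pow_add]
    ring
  simp only [heval]
  rw [integral_finset_sum _ (fun m _ => ((integrableOn_pow_mul_exp (i + m)).const_mul _))]
  simp only [integral_const_mul, integral_pow_mul_exp]
  calc ∑ m ∈ Finset.range (j + 1),
        ((-1 : ℝ) ^ j * j.factorial * ((-1 : ℝ) ^ m / m.factorial) *
          (j.factorial / (m.factorial * (j - m).factorial))) * (i + m).factorial
      = ∑ m ∈ Finset.range (j + 1), (i.factorial * j.factorial : ℝ) *
          ((-1 : ℝ) ^ (j + m) * (j.choose m) * ((m + i + 0).choose i)) := by
        refine Finset.sum_congr rfl fun m hm => ?_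
        exact term_eq i j m (Nat.lt_succ_iff.mp (Finset.mem_range.mp hm))
    _ = (i.factorial * j.factorial : ℝ) * ((i + 0).choose (i - j)) := by
        rw [← Finset.mul_sum, key j i 0 h]
    _ = (i.factorial : ℝ) * (j.factorial : ℝ) * (i.choose j : ℝ) := by
        rw [add_zero, Nat.choose_symm h]
end

section
/- For all natural numbers i and j with i ≥ j, (-1)^j · ∑_{m=0}^j (-1)^m·C(j,m)·C(m+i,i) = C(i,j), where C(a,b) denotes the binomial coefficient. -/
open Finset

lemma innerAltSum7 (j k : ℕ) :
    ∑ m ∈ Finset.range (j + 1), (-1 : ℤ) ^ m * (j.choose m : ℤ) * (m.choose k : ℤ) =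
      if k = j then (-1 : ℤ) ^ j else 0 := by
  by_cases hk : k ≤ j
  · have hsplit : Finset.range (j + 1) = Finset.range k ∪ Finset.Ico k (j + 1) := by
      rw [Finset.range_eq_Ico, Finset.range_eq_Ico, Finset.Ico_union_Ico_eq_Ico (Nat.zero_le _) (by omega)]
    rw [hsplit, Finset.sum_union (by
      rw [Finset.range_eq_Ico]
      exact Finset.Ico_disjoint_Ico_consecutive 0 k (j + 1))]
    have h1 : ∑ m ∈ Finset.range k, (-1 : ℤ) ^ m * (j.choose m : ℤ) * (m.choose k : ℤ) = 0 := by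
      apply Finset.sum_eq_zero
      intro m hm
      rw [Finset.mem_range] at hm
      rw [Nat.choose_eq_zero_of_lt hm]
      simp
    rw [h1, zero_add, Finset.sum_Ico_eq_sum_range]
    have key : ∀ t ∈ Finset.range (j + 1 - k),
        (-1 : ℤ) ^ (k + t) * (j.choose (k + t) : ℤ) * ((k + t).choose k : ℤ) =
        ((-1 : ℤ) ^ k * (j.choose k : ℤ)) * ((-1 : ℤ) ^ t * ((j - k).choose t : ℤ)) := by
      intro t ht
      rw [Finset.mem_range] at ht
      have hle : k + t ≤ j := by omega
      have := Nat.choose_mul (n := j) (Nat.le_add_right k t)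
      rw [Nat.add_sub_cancel_left] at this
      have h2 : ((j.choose (k + t)) : ℤ) * ((k + t).choose k : ℤ)
          = (j.choose k : ℤ) * ((j - k).choose t : ℤ) := by exact_mod_cast this
      linear_combination ((-1 : ℤ) ^ (k + t)) * h2
    rw [Finset.sum_congr rfl key, ← Finset.mul_sum]
    have hrange : j + 1 - k = (j - k) + 1 := by omega
    rw [hrange, Int.alternating_sum_range_choose]
    by_cases hkj : k = j
    · subst hkj; simp
    · rw [if_neg (by omega), if_neg hkj, mul_zero]
  · rw [if_neg (by omega)]
    apply Finset.sum_eq_zero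
    intro m hm
    rw [Finset.mem_range] at hm
    rw [Nat.choose_eq_zero_of_lt (show m < k by omega)]
    simp

theorem stmt7 (i j : ℕ) (h : j ≤ i) :
    (-1 : ℤ) ^ j * ∑ m ∈ Finset.range (j + 1),
        (-1 : ℤ) ^ m * (j.choose m : ℤ) * ((m + i).choose i : ℤ) =
      (i.choose j : ℤ) := by
  have vand : ∀ m : ℕ, ((m + i).choose i : ℤ) =
      ∑ a ∈ Finset.range (i + 1), (m.choose a : ℤ) * (i.choose (i - a) : ℤ) := by
    intro m
    rw [Nat.add_choose_eq, Finset.Nat.sum_antidiagonal_eq_sum_range_succ_mk]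
    push_cast
    rfl
  have : ∑ m ∈ Finset.range (j + 1),
      (-1 : ℤ) ^ m * (j.choose m : ℤ) * ((m + i).choose i : ℤ)
      = ∑ a ∈ Finset.range (i + 1), (i.choose (i - a) : ℤ) *
          ∑ m ∈ Finset.range (j + 1), (-1 : ℤ) ^ m * (j.choose m : ℤ) * (m.choose a : ℤ) := by
    simp_rw [vand, Finset.mul_sum]
    rw [Finset.sum_comm]
    apply Finset.sum_congr rfl
    intro a _
    apply Finset.sum_congr rfl
    intro m _
    ring
  rw [this]
  simp_rw [innerAltSum7]
  rw [Finset.sum_eq_single j]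
  · rw [if_pos rfl, Nat.choose_symm h, mul_comm ((i.choose j : ℤ)) _, ← mul_assoc, ← pow_add,
      ← two_mul, pow_mul, neg_one_sq, one_pow, one_mul]
  · intro b _ hb
    rw [if_neg hb, mul_zero]
  · intro hj
    exact absurd (Finset.mem_range.mpr (by omega)) hj
end

section
/- Let M ≥ 0 and n ≥ 1. Every real zero λ of the polynomial A_n satisfies λ > (1+(n+1)M)/(n(n+1)(3+(n+2)M)). -/
open Polynomial

/-- The polynomials `A_n(λ)` of the Laguerre case (b):
`A_0 = 1`, `A_1(λ) = λ - (1+2M)/(1+M)`, and `A_n(λ) = (λ-2)·A_{n-1}(λ) - A_{n-2}(λ)` for `n ≥ 2`. -/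
noncomputable def ApolyB (M : ℝ) : ℕ → Polynomial ℝ
  | 0 => 1
  | 1 => Polynomial.X - Polynomial.C ((1 + 2 * M) / (1 + M))
  | n + 2 => (Polynomial.X - Polynomial.C 2) * ApolyB M (n + 1) - ApolyB M n

/-- `B k = (-1)^k A_k(λ)`. -/
noncomputable def auxB (M lam : ℝ) (k : ℕ) : ℝ := (-1)^k * (ApolyB M k).eval lam
/-- `b k = B k (0) = 1 + k μ`, `μ = M/(1+M)`. -/
noncomputable def auxb (M : ℝ) (k : ℕ) : ℝ := 1 + k * (M/(1+M))
noncomputable def auxT (M : ℝ) (k : ℕ) : ℝ := k + (M/(1+M)) * k * (k-1) / 2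
noncomputable def auxS (M : ℝ) (k : ℕ) : ℝ := k*(k+1)/2 + (M/(1+M)) * k * (k*k-1) / 6

lemma auxB_rec (M lam : ℝ) (k : ℕ) :
    auxB M lam (k+2) = (2 - lam) * auxB M lam (k+1) - auxB M lam k := by
  simp only [auxB, ApolyB, eval_mul, eval_sub, eval_X, eval_C, pow_succ]
  ring

lemma auxB_zero (M lam : ℝ) : auxB M lam 0 = 1 := by simp [auxB, ApolyB]

lemma auxB_one (M lam : ℝ) (hM : 0 ≤ M) : auxB M lam 1 = auxb M 1 - lam := by
  have h1 : (0:ℝ) < 1 + M := by linarith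
  simp [auxB, ApolyB, auxb]
  field_simp
  ring

lemma auxb_succ (M : ℝ) (m : ℕ) : auxb M (m+1) = auxb M m + M/(1+M) := by
  simp only [auxb]; push_cast; ring

lemma auxT_succ (M : ℝ) (m : ℕ) : auxT M (m+1) = auxT M m + auxb M m := by
  simp only [auxT, auxb]; push_cast; ring

lemma auxS_succ (M : ℝ) (m : ℕ) : auxS M (m+1) = auxS M m + auxT M (m+1) := by
  simp only [auxS, auxT]; push_cast; ring

lemma auxS_nonneg (M : ℝ) (hM : 0 ≤ M) (k : ℕ) : 0 ≤ auxS M k := by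
  have h1 : (0:ℝ) < 1 + M := by linarith
  have hμ : 0 ≤ M/(1+M) := div_nonneg hM h1.le
  match k with
  | 0 => norm_num [auxS]
  | (m+1) =>
    simp only [auxS]
    push_cast
    have hm : (0:ℝ) ≤ (m:ℝ) := Nat.cast_nonneg m
    have h2 : (0:ℝ) ≤ (↑m + 1) * (↑m + 1 + 1) / 2 := by positivity
    have h3 : (0:ℝ) ≤ ((↑m:ℝ) + 1) * ((↑m + 1) * (↑m + 1) - 1) := by nlinarith
    nlinarith [mul_nonneg hμ h3]

lemma keypoly (M x y : ℝ) (hM : 0 ≤ M) (hx1 : 1 ≤ x) (hxy : x ≤ y) :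
    (1+(y+1)*M) * ((1+M)*(3*x*(x+1)) + M*x*(x*x-1)) < 6*(1+M+x*M)*(y*(y+1)*(3+(y+2)*M)) := by
  have h0 : (1+(y+1)*M) * ((1+M)*(3*x*(x+1)) + M*x*(x*x-1))
      = (1+(y+1)*M)*(x*(x+1))*(3+(x+2)*M) := by ring
  have hc1 : (0:ℝ) < 1+(y+1)*M := by nlinarith
  have hc2 : (0:ℝ) < x*(x+1) := by nlinarith
  have h1 : (1+(y+1)*M)*(x*(x+1))*(3+(x+2)*M) ≤ (1+(y+1)*M)*(x*(x+1))*(3+(y+2)*M) := by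
    have : (3:ℝ)+(x+2)*M ≤ 3+(y+2)*M := by nlinarith
    nlinarith [mul_pos hc1 hc2]
  have h2 : (1+(y+1)*M)*(x+1) ≤ (1+(x+1)*M)*(y+1) := by nlinarith
  have hc3 : (0:ℝ) < 3+(y+2)*M := by nlinarith
  have h3 : (1+(y+1)*M)*(x*(x+1))*(3+(y+2)*M) ≤ (1+(x+1)*M)*(y+1)*x*(3+(y+2)*M) := by
    have := mul_le_mul_of_nonneg_right
      (mul_le_mul_of_nonneg_left h2 (by linarith : (0:ℝ) ≤ x)) hc3.le
    nlinarith [this]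
  have h4 : (1+(x+1)*M)*(y+1)*x*(3+(y+2)*M) ≤ (1+(x+1)*M)*(y+1)*y*(3+(y+2)*M) := by
    have hc4 : (0:ℝ) < (1+(x+1)*M)*(y+1) := by nlinarith
    nlinarith [mul_pos hc4 hc3]
  have h5 : (0:ℝ) < (1+M+x*M)*(y*(y+1)*(3+(y+2)*M)) := by
    have : (0:ℝ) < 1+M+x*M := by nlinarith
    have hy : (0:ℝ) < y := by linarith
    positivity
  nlinarith [h1, h3, h4, h5]

lemma keyeq (M x y : ℝ) (hM : 0 ≤ M) (hx1 : 1 ≤ x) (hxy : x ≤ y) :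
    (1 + x*(M/(1+M))) - (1+(y+1)*M)/(y*(y+1)*(3+(y+2)*M)) * (x*(x+1)/2 + (M/(1+M))*x*(x*x-1)/6)
    = (6*(1+M+x*M)*(y*(y+1)*(3+(y+2)*M)) - (1+(y+1)*M) * ((1+M)*(3*x*(x+1)) + M*x*(x*x-1)))
      / (6*(1+M)*(y*(y+1)*(3+(y+2)*M))) := by
  have h1 : (0:ℝ) < 1+M := by linarith
  have hy : (0:ℝ) < y := by linarith
  have hy1 : (0:ℝ) < y+1 := by linarith
  have h3 : (0:ℝ) < 3+(y+2)*M := by nlinarith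
  field_simp
  ring

lemma keyineq (M : ℝ) (hM : 0 ≤ M) (N k : ℕ) (h1k : 1 ≤ k) (hkN : k ≤ N) :
    (1 + ((N:ℝ)+1)*M)/((N:ℝ)*((N:ℝ)+1)*(3+((N:ℝ)+2)*M)) * auxS M k < auxb M k := by
  have hx1 : (1:ℝ) ≤ (k:ℝ) := by exact_mod_cast h1k
  have hxy : (k:ℝ) ≤ (N:ℝ) := by exact_mod_cast hkN
  have hpoly := keypoly M (k:ℝ) (N:ℝ) hM hx1 hxy
  have hy : (0:ℝ) < (N:ℝ) := by linarith
  have hy1 : (0:ℝ) < (N:ℝ)+1 := by linarith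
  have h3 : (0:ℝ) < 3+((N:ℝ)+2)*M := by nlinarith
  have h1M : (0:ℝ) < 1+M := by linarith
  have hdpos : (0:ℝ) < 6*(1+M)*((N:ℝ)*((N:ℝ)+1)*(3+((N:ℝ)+2)*M)) := by positivity
  have heq := keyeq M (k:ℝ) (N:ℝ) hM hx1 hxy
  have hkey : 0 < auxb M k
      - (1 + ((N:ℝ)+1)*M)/((N:ℝ)*((N:ℝ)+1)*(3+((N:ℝ)+2)*M)) * auxS M k := by
    simp only [auxb, auxS]
    rw [heq]
    exact div_pos (by linarith) hdpos
  linarith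

theorem stmt9 (M : ℝ) (hM : 0 ≤ M) (n : ℕ) (hn : 1 ≤ n) (lam : ℝ)
    (h : (ApolyB M n).eval lam = 0) :
    (1 + ((n : ℝ) + 1) * M) / ((n : ℝ) * ((n : ℝ) + 1) * (3 + ((n : ℝ) + 2) * M)) < lam := by
  by_contra hcon
  push_neg at hcon
  obtain ⟨c, hc⟩ : ∃ c, c = (1 + ((n : ℝ) + 1) * M) / ((n : ℝ) * ((n : ℝ) + 1) * (3 + ((n : ℝ) + 2) * M)) := ⟨_, rfl⟩
  rw [← hc] at hcon
  have h1M : (0:ℝ) < 1 + M := by linarith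
  have hμ0 : 0 ≤ M/(1+M) := div_nonneg hM h1M.le
  have hn1 : (1:ℝ) ≤ (n:ℝ) := by exact_mod_cast hn
  have hc0 : 0 ≤ c := by
    rw [hc]
    apply div_nonneg (by nlinarith)
    have h3 : (0:ℝ) < 3+((n:ℝ)+2)*M := by nlinarith
    exact le_of_lt (mul_pos (mul_pos (by linarith) (by linarith)) h3)
  obtain ⟨L, hLdef⟩ : ∃ L, L = max lam 0 := ⟨_, rfl⟩
  have hlamL' : lam ≤ L := hLdef ▸ le_max_left _ _
  have hlamL : lam ≤ L := hlamL'
  have hL0 : (0:ℝ) ≤ L := hLdef ▸ le_max_right _ _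
  have hLc : L ≤ c := hLdef ▸ max_le hcon hc0
  -- value facts
  have hB0 : auxB M lam 0 = 1 := auxB_zero M lam
  have hB1 : auxB M lam 1 = auxb M 1 - lam := auxB_one M lam hM
  have hb0 : auxb M 0 = 1 := by norm_num [auxb]
  have hS0 : auxS M 0 = 0 := by norm_num [auxS]
  have hS1 : auxS M 1 = 1 := by norm_num [auxS]
  have hT1 : auxT M 1 = 1 := by norm_num [auxT]
  have main : ∀ k : ℕ, k + 1 ≤ n →
      (auxB M lam k ≥ auxb M k - L * auxS M k) ∧
      (auxB M lam (k+1) ≥ auxb M (k+1) - L * auxS M (k+1)) ∧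
      (auxB M lam (k+1) - auxB M lam k ≥ M/(1+M) - L * auxT M (k+1)) ∧
      (0 ≤ lam → auxB M lam k ≤ auxb M k ∧ auxB M lam (k+1) ≤ auxb M (k+1) ∧
        auxB M lam (k+1) - auxB M lam k ≤ M/(1+M)) := by
    intro k
    induction k with
    | zero =>
      intro _
      have hb1 : auxb M 1 = 1 + M/(1+M) := by norm_num [auxb]
      refine ⟨?_, ?_, ?_, ?_⟩
      · rw [hB0, hb0, hS0]; nlinarith
      · rw [hB1, hS1]; nlinarith
      · rw [hB1, hB0, hT1, hb1]; nlinarith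
      · intro hl
        refine ⟨by rw [hB0, hb0], by rw [hB1]; linarith, ?_⟩
        rw [hB1, hB0, hb1]; linarith
    | succ m ih =>
      intro hm
      obtain ⟨l0, l1, dlow, hup⟩ := ih (by omega)
      have hS1pos : 0 ≤ auxS M (m+1) := auxS_nonneg M hM (m+1)
      have hkeym := keyineq M hM n (m+1) (by omega) (by omega)
      rw [← hc] at hkeym
      have pos1 : 0 < auxB M lam (m+1) := by
        have := mul_le_mul_of_nonneg_right hLc hS1pos
        linarith
      have hrec : auxB M lam (m+1+1) = (2 - lam) * auxB M lam (m+1) - auxB M lam m :=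
        auxB_rec M lam m
      have hbs := auxb_succ M (m+1)
      have hTs' : auxT M (m+1+1) = auxT M (m+1) + auxb M (m+1) := auxT_succ M (m+1)
      have hSs := auxS_succ M (m+1)
      have dnew : auxB M lam (m+1+1) - auxB M lam (m+1) ≥ M/(1+M) - L * auxT M (m+1+1) := by
        rcases le_or_gt 0 lam with hl | hl
        · have hLlam : L = lam := hLdef.trans (max_eq_left hl)
          obtain ⟨u0, u1, ud⟩ := hup hl
          have hmul : lam * auxB M lam (m+1) ≤ lam * auxb M (m+1) :=
            mul_le_mul_of_nonneg_left u1 hl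
          have hLT : lam * auxT M (m+1+1) = lam * auxT M (m+1) + lam * auxb M (m+1) := by
            rw [hTs', mul_add]
          rw [hLlam] at dlow ⊢
          linarith [hrec, hmul, hLT, dlow]
        · have hLlam : L = 0 := hLdef.trans (max_eq_right hl.le)
          have hmul : 0 ≤ -lam * auxB M lam (m+1) :=
            mul_nonneg (neg_nonneg.2 hl.le) pos1.le
          rw [hLlam] at dlow ⊢
          linarith [hrec, hmul, dlow]
      have hLS : L * auxS M (m+1+1) = L * auxS M (m+1) + L * auxT M (m+1+1) := by
        rw [hSs, mul_add]
      have lnew : auxB M lam (m+1+1) ≥ auxb M (m+1+1) - L * auxS M (m+1+1) := by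
        rw [hbs]; linarith
      refine ⟨l1, lnew, dnew, ?_⟩
      intro hl
      obtain ⟨u0, u1, ud⟩ := hup hl
      have hmul : 0 ≤ lam * auxB M lam (m+1) := mul_nonneg hl pos1.le
      have dup : auxB M lam (m+1+1) - auxB M lam (m+1) ≤ M/(1+M) := by linarith [hrec, ud, hmul]
      exact ⟨u1, by rw [hbs]; linarith, dup⟩
  obtain ⟨m, rfl⟩ : ∃ m, n = m + 1 := ⟨n - 1, by omega⟩
  have hfin := (main m (by omega)).2.1
  have hkeyN := keyineq M hM (m+1) (m+1) (by omega) le_rfl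
  rw [← hc] at hkeyN
  have hSpos : 0 ≤ auxS M (m+1) := auxS_nonneg M hM (m+1)
  have hBz : auxB M lam (m+1) = 0 := by simp [auxB, h]
  have := mul_le_mul_of_nonneg_right hLc hSpos
  linarith
end

section
/- Let M ≥ 0 and n ≥ 1. For every nonzero real polynomial p of degree at most n, ∫_0^∞ p'(x)²·e^{-x} dx < (n(n+1)(3+(n+2)M)/(1+(n+1)M))·(∫_0^∞ p(x)²·e^{-x} dx + M·p(0)²). -/
open Polynomial MeasureTheory Finset

namespace Stmt10Aux

lemma mom_integrable (k : ℕ) :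
    IntegrableOn (fun x : ℝ => x ^ k * Real.exp (-x)) (Set.Ioi 0) := by
  have h := Real.GammaIntegral_convergent (s := (k : ℝ) + 1) (by positivity)
  refine h.congr_fun (fun x hx => ?_) measurableSet_Ioi
  have : ((k : ℝ) + 1 - 1) = (k : ℝ) := by ring
  rw [this]; beta_reduce; rw [Real.rpow_natCast, mul_comm]

lemma mom (k : ℕ) :
    (∫ x in Set.Ioi (0:ℝ), x ^ k * Real.exp (-x)) = k.factorial := by
  have h1 := Real.Gamma_eq_integral (s := (k : ℝ) + 1) (by positivity)
  have h2 : Real.Gamma ((k : ℝ) + 1) = k.factorial := Real.Gamma_nat_eq_factorial k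
  rw [h1] at h2
  rw [← h2]
  refine setIntegral_congr_fun measurableSet_Ioi (fun x hx => ?_)
  have : ((k : ℝ) + 1 - 1) = (k : ℝ) := by ring
  rw [this]; beta_reduce; rw [Real.rpow_natCast, mul_comm]

lemma int_sq (q : Polynomial ℝ) (N : ℕ) (h : q.natDegree < N + 1) :
    (∫ x in Set.Ioi (0:ℝ), (q.eval x) ^ 2 * Real.exp (-x))
      = ∑ i ∈ range (N+1), ∑ j ∈ range (N+1),
          q.coeff i * q.coeff j * ((i+j).factorial : ℝ) := by
  have key : ∀ x : ℝ, (q.eval x) ^ 2 * Real.exp (-x)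
      = ∑ i ∈ range (N+1), ∑ j ∈ range (N+1),
          q.coeff i * q.coeff j * (x ^ (i+j) * Real.exp (-x)) := by
    intro x
    rw [eval_eq_sum_range' h, sq, sum_mul_sum, sum_mul]
    refine sum_congr rfl fun i _ => ?_
    rw [sum_mul]
    refine sum_congr rfl fun j _ => ?_
    rw [pow_add]; ring
  simp_rw [key]
  rw [integral_finset_sum _ (fun i _ => integrable_finset_sum _
      (fun j _ => ((mom_integrable (i+j)).const_mul _)))]
  refine sum_congr rfl fun i _ => ?_
  rw [integral_finset_sum _ (fun j _ => ((mom_integrable (i+j)).const_mul _))]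
  refine sum_congr rfl fun j _ => ?_
  rw [MeasureTheory.integral_const_mul, mom]

lemma vandermonde_sum (i j N : ℕ) (hj : j ≤ N) :
    ∑ k ∈ range (N+1), (i.choose k) * (j.choose k) = (i+j).choose j := by
  have h1 : ∑ k ∈ range (j+1), i.choose k * j.choose k
      = ∑ k ∈ range (N+1), i.choose k * j.choose k := by
    refine sum_subset (range_subset_range.mpr (by omega)) (fun k _ hk => ?_)
    rw [mem_range, not_lt] at hk
    rw [Nat.choose_eq_zero_of_lt (show j < k by omega), mul_zero]
  rw [← h1, Nat.add_choose_eq, Finset.Nat.sum_antidiagonal_eq_sum_range_succ_mk]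
  refine sum_congr rfl fun k hk => ?_
  rw [mem_range] at hk
  rw [Nat.choose_symm (by omega)]

/-- The `k`-th "Laguerre coefficient" of `q`, with coefficients read up to degree `N`. -/
noncomputable def lc (q : Polynomial ℝ) (N k : ℕ) : ℝ :=
  ∑ i ∈ range (N+1), q.coeff i * ((-1:ℝ)^k * (i.factorial : ℝ) * (i.choose k : ℝ))

lemma parseval (q : Polynomial ℝ) (N : ℕ) (h : q.natDegree < N+1) :
    (∫ x in Set.Ioi (0:ℝ), (q.eval x) ^ 2 * Real.exp (-x))
      = ∑ k ∈ range (N+1), (lc q N k)^2 := by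
  rw [int_sq q N h]
  unfold lc
  symm
  have expand : ∀ k ∈ range (N+1), (∑ i ∈ range (N+1),
        q.coeff i * ((-1:ℝ)^k * (i.factorial : ℝ) * (i.choose k : ℝ)))^2
      = ∑ i ∈ range (N+1), ∑ j ∈ range (N+1),
          q.coeff i * q.coeff j *
            (((-1:ℝ)^k * (-1:ℝ)^k) * ((i.factorial : ℝ) * (j.factorial : ℝ)
              * ((i.choose k : ℝ) * (j.choose k : ℝ)))) := by
    intro k _
    rw [sq, sum_mul_sum]
    refine sum_congr rfl fun i _ => sum_congr rfl fun j _ => by ring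
  have hneg : ∀ k : ℕ, ((-1:ℝ)^k * (-1:ℝ)^k) = 1 := fun k => by
    rw [← pow_add]; exact Even.neg_one_pow ⟨k, rfl⟩
  calc ∑ k ∈ range (N+1), (∑ i ∈ range (N+1),
          q.coeff i * ((-1:ℝ)^k * (i.factorial : ℝ) * (i.choose k : ℝ)))^2
      = ∑ k ∈ range (N+1), ∑ i ∈ range (N+1), ∑ j ∈ range (N+1),
          q.coeff i * q.coeff j *
            (((-1:ℝ)^k * (-1:ℝ)^k) * ((i.factorial : ℝ) * (j.factorial : ℝ)
              * ((i.choose k : ℝ) * (j.choose k : ℝ)))) := sum_congr rfl expand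
    _ = ∑ i ∈ range (N+1), ∑ k ∈ range (N+1), ∑ j ∈ range (N+1),
          q.coeff i * q.coeff j *
            (((-1:ℝ)^k * (-1:ℝ)^k) * ((i.factorial : ℝ) * (j.factorial : ℝ)
              * ((i.choose k : ℝ) * (j.choose k : ℝ)))) := Finset.sum_comm
    _ = ∑ i ∈ range (N+1), ∑ j ∈ range (N+1), ∑ k ∈ range (N+1),
          q.coeff i * q.coeff j *
            (((-1:ℝ)^k * (-1:ℝ)^k) * ((i.factorial : ℝ) * (j.factorial : ℝ)
              * ((i.choose k : ℝ) * (j.choose k : ℝ)))) :=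
        sum_congr rfl fun i _ => Finset.sum_comm
    _ = ∑ i ∈ range (N+1), ∑ j ∈ range (N+1),
          q.coeff i * q.coeff j * ((i+j).factorial : ℝ) := by
        refine sum_congr rfl fun i hi => sum_congr rfl fun j hj => ?_
        rw [mem_range] at hj
        calc ∑ k ∈ range (N+1),
              q.coeff i * q.coeff j *
                (((-1:ℝ)^k * (-1:ℝ)^k) * ((i.factorial : ℝ) * (j.factorial : ℝ)
                  * ((i.choose k : ℝ) * (j.choose k : ℝ))))
            = ∑ k ∈ range (N+1),
                (q.coeff i * q.coeff j * ((i.factorial : ℝ) * (j.factorial : ℝ)))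
                  * ((i.choose k * j.choose k : ℕ) : ℝ) := by
              refine sum_congr rfl fun k _ => ?_
              rw [hneg k]
              push_cast
              ring
          _ = (q.coeff i * q.coeff j * ((i.factorial : ℝ) * (j.factorial : ℝ)))
                * (((∑ k ∈ range (N+1), i.choose k * j.choose k : ℕ)) : ℝ) := by
              rw [← mul_sum, Nat.cast_sum]
          _ = q.coeff i * q.coeff j * ((i+j).factorial : ℝ) := by
              rw [vandermonde_sum i j N (by omega)]
              have hfac : (i.factorial : ℝ) * (j.factorial : ℝ) * (((i+j).choose j : ℕ) : ℝ)
                  = ((i+j).factorial : ℝ) := by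
                rw_mod_cast [← Nat.choose_mul_factorial_mul_factorial (Nat.le_add_left j i)]
                have h2 : i + j - j = i := by omega
                rw [h2]
                ring_nf
              rw [mul_assoc, hfac]

lemma alt_partial (j k : ℕ) (hj : 1 ≤ j) :
    ∑ m ∈ range (k+1), (-1:ℝ)^m * (j.choose m : ℝ) = (-1:ℝ)^k * ((j-1).choose k : ℝ) := by
  induction k with
  | zero => simp
  | succ k ih =>
    rw [sum_range_succ, ih]
    obtain ⟨j', rfl⟩ : ∃ j', j = j' + 1 := ⟨j - 1, by omega⟩
    simp only [Nat.add_sub_cancel]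
    rw [Nat.choose_succ_succ]
    push_cast
    ring

lemma lc_derivative (p : Polynomial ℝ) (N : ℕ) (h : p.natDegree ≤ N) (k : ℕ) (hk : k ≤ N) :
    lc (derivative p) N k = - ∑ m ∈ Ioc k N, lc p N m := by
  unfold lc
  have hstep : - ∑ m ∈ Ioc k N, ∑ i ∈ range (N+1),
        p.coeff i * ((-1:ℝ)^m * (i.factorial : ℝ) * (i.choose m : ℝ))
      = ∑ i ∈ range (N+1), ∑ m ∈ Ioc k N,
          -(p.coeff i * ((-1:ℝ)^m * (i.factorial : ℝ) * (i.choose m : ℝ))) := by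
    rw [Finset.sum_comm (s := Ioc k N) (t := range (N+1)), ← Finset.sum_neg_distrib]
    exact sum_congr rfl fun i _ => (Finset.sum_neg_distrib _).symm
  rw [hstep]
  have inner : ∀ i ∈ range (N+1),
      (∑ m ∈ Ioc k N, -(p.coeff i * ((-1:ℝ)^m * (i.factorial : ℝ) * (i.choose m : ℝ))))
      = p.coeff i * (i.factorial : ℝ) *
          (if 1 ≤ i then (-1:ℝ)^k * ((i-1).choose k : ℝ) else 0) := by
    intro i hi
    rw [mem_range] at hi
    by_cases h1 : 1 ≤ i
    · have hsum : ∑ m ∈ Ioc k N, (-1:ℝ)^m * (i.choose m : ℝ)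
          = - ((-1:ℝ)^k * ((i-1).choose k : ℝ)) := by
        have hsplit : (∑ m ∈ range (k+1), (-1:ℝ)^m * (i.choose m : ℝ))
            + ∑ m ∈ Ioc k N, (-1:ℝ)^m * (i.choose m : ℝ)
            = ∑ m ∈ range (N+1), (-1:ℝ)^m * (i.choose m : ℝ) := by
          simp only [range_eq_Ico, ← Finset.Ico_add_one_add_one_eq_Ioc]
          exact Finset.sum_Ico_consecutive _ (by omega) (by omega)
        have hfull : ∑ m ∈ range (N+1), (-1:ℝ)^m * (i.choose m : ℝ) = 0 := by
          have htrunc : ∑ m ∈ range (i+1), (-1:ℝ)^m * (i.choose m : ℝ)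
              = ∑ m ∈ range (N+1), (-1:ℝ)^m * (i.choose m : ℝ) := by
            refine sum_subset (range_subset_range.mpr (by omega)) (fun m _ hm => ?_)
            rw [mem_range, not_lt] at hm
            rw [Nat.choose_eq_zero_of_lt (by omega)]
            simp
          rw [← htrunc, alt_partial i i h1, Nat.choose_eq_zero_of_lt (by omega)]
          simp
        rw [alt_partial i k h1] at hsplit
        rw [hfull] at hsplit
        linarith
      simp only [if_pos h1]
      calc (∑ m ∈ Ioc k N, -(p.coeff i * ((-1:ℝ)^m * (i.factorial : ℝ) * (i.choose m : ℝ))))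
          = (-(p.coeff i * (i.factorial : ℝ))) *
              ∑ m ∈ Ioc k N, (-1:ℝ)^m * (i.choose m : ℝ) := by
            rw [mul_sum]; exact sum_congr rfl fun m _ => by ring
        _ = p.coeff i * (i.factorial : ℝ) * ((-1:ℝ)^k * ((i-1).choose k : ℝ)) := by
            rw [hsum]; ring
    · have hi0 : i = 0 := by omega
      subst hi0
      simp only [if_neg h1, mul_zero]
      refine Finset.sum_eq_zero fun m hm => ?_
      rw [mem_Ioc] at hm
      rw [Nat.choose_eq_zero_of_lt (by omega)]
      simp
  rw [sum_congr rfl inner]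
  rw [Finset.sum_range_succ' (fun i => p.coeff i * (i.factorial : ℝ) *
      (if 1 ≤ i then (-1:ℝ)^k * ((i-1).choose k : ℝ) else 0)) N]
  simp only [if_neg (by omega : ¬ (1:ℕ) ≤ 0), mul_zero, add_zero]
  rw [Finset.sum_range_succ]
  have hlast : (derivative p).coeff N = 0 := by
    rw [coeff_derivative, coeff_eq_zero_of_natDegree_lt (by omega), zero_mul]
  rw [hlast]
  simp only [zero_mul, add_zero]
  refine sum_congr rfl fun i hi => ?_
  rw [coeff_derivative]
  simp only [if_pos (by omega : 1 ≤ i + 1), Nat.add_sub_cancel]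
  have : ((i+1).factorial : ℝ) = ((i:ℝ) + 1) * (i.factorial : ℝ) := by
    rw [Nat.factorial_succ]; push_cast; ring
  rw [this]
  push_cast
  ring

lemma lc_top_ne (p : Polynomial ℝ) (hp : p ≠ 0) (N : ℕ) (h : p.natDegree ≤ N) :
    lc p N p.natDegree ≠ 0 := by
  unfold lc
  rw [Finset.sum_eq_single p.natDegree]
  · simp only [Nat.choose_self, Nat.cast_one, mul_one]
    intro hcon
    rcases mul_eq_zero.mp hcon with h1 | h2
    · exact (Polynomial.leadingCoeff_ne_zero.mpr hp) h1
    · rcases mul_eq_zero.mp h2 with h3 | h4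
      · exact (pow_ne_zero _ (by norm_num : (-1:ℝ) ≠ 0)) h3
      · exact (Nat.cast_ne_zero.mpr (Nat.factorial_ne_zero _)) h4
  · intro i _ hne
    rcases lt_or_gt_of_ne hne with hlt | hgt
    · rw [Nat.choose_eq_zero_of_lt hlt]
      simp
    · rw [Polynomial.coeff_eq_zero_of_natDegree_lt hgt]
      simp
  · intro hmem
    exact absurd (mem_range.mpr (Nat.lt_succ_of_le h)) hmem

end Stmt10Aux

open Stmt10Aux

theorem stmt10 (M : ℝ) (hM : 0 ≤ M) (n : ℕ) (hn : 1 ≤ n)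
    (p : Polynomial ℝ) (hp : p ≠ 0) (hdeg : p.degree ≤ n) :
    (∫ x in Set.Ioi (0 : ℝ), ((Polynomial.derivative p).eval x) ^ 2 * Real.exp (-x)) <
      ((n : ℝ) * ((n : ℝ) + 1) * (3 + ((n : ℝ) + 2) * M) / (1 + ((n : ℝ) + 1) * M)) *
        ((∫ x in Set.Ioi (0 : ℝ), (p.eval x) ^ 2 * Real.exp (-x)) + M * (p.eval 0) ^ 2) := by
  have hdn : p.natDegree ≤ n := natDegree_le_iff_degree_le.mpr hdeg
  have hdn' : (derivative p).natDegree ≤ n :=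
    ((natDegree_derivative_le p).trans (Nat.sub_le _ _)).trans hdn
  have hI : (∫ x in Set.Ioi (0 : ℝ), (p.eval x) ^ 2 * Real.exp (-x))
      = ∑ k ∈ range (n+1), (lc p n k)^2 := parseval p n (Nat.lt_succ_of_le hdn)
  have hJ : (∫ x in Set.Ioi (0 : ℝ), ((Polynomial.derivative p).eval x) ^ 2 * Real.exp (-x))
      = ∑ k ∈ range (n+1), (lc (derivative p) n k)^2 :=
    parseval (derivative p) n (Nat.lt_succ_of_le hdn')
  set S : ℝ := ∑ k ∈ range (n+1), (lc p n k)^2 with hS_def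
  have hSpos : 0 < S := by
    refine Finset.sum_pos' (fun k _ => sq_nonneg _) ⟨p.natDegree,
      mem_range.mpr (Nat.lt_succ_of_le hdn), ?_⟩
    exact lt_of_le_of_ne (sq_nonneg _) (Ne.symm (pow_ne_zero 2 (lc_top_ne p hp n hdn)))
  have hbound : ∑ k ∈ range (n+1), (lc (derivative p) n k)^2 ≤ ((n:ℝ) * ((n:ℝ)+1)) * S := by
    have step1 : ∀ k ∈ range (n+1), (lc (derivative p) n k)^2 ≤ (n:ℝ) * S := by
      intro k hk
      rw [mem_range] at hk
      rw [lc_derivative p n hdn k (by omega), neg_sq]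
      calc (∑ m ∈ Ioc k n, lc p n m)^2
          ≤ (Ioc k n).card * ∑ m ∈ Ioc k n, (lc p n m)^2 := sq_sum_le_card_mul_sum_sq
        _ ≤ (n:ℝ) * S := by
            refine mul_le_mul ?_ ?_ (Finset.sum_nonneg fun m _ => sq_nonneg _)
              (Nat.cast_nonneg n)
            · rw [Nat.card_Ioc]
              exact_mod_cast Nat.cast_le.mpr (by omega : n - k ≤ n)
            · refine Finset.sum_le_sum_of_subset_of_nonneg ?_ (fun m _ _ => sq_nonneg _)
              intro m hm
              rw [mem_Ioc] at hm
              exact mem_range.mpr (by omega)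
    calc ∑ k ∈ range (n+1), (lc (derivative p) n k)^2
        ≤ ∑ _k ∈ range (n+1), (n:ℝ) * S := Finset.sum_le_sum step1
      _ = ((n:ℝ) * ((n:ℝ)+1)) * S := by
          rw [Finset.sum_const, card_range, nsmul_eq_mul]
          push_cast
          ring
  rw [hI, hJ]
  have hx : (1:ℝ) ≤ (n:ℝ) := by exact_mod_cast hn
  set x : ℝ := (n:ℝ)
  have hden : 0 < 1 + (x + 1) * M := by nlinarith
  have hC : x * (x + 1) < x * (x+1) * (3 + (x+2)*M) / (1 + (x+1)*M) := by
    rw [lt_div_iff₀ hden]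
    nlinarith
  have hCnonneg : 0 ≤ x * (x+1) * (3 + (x+2)*M) / (1 + (x+1)*M) := by positivity
  calc ∑ k ∈ range (n+1), (lc (derivative p) n k)^2
      ≤ (x * (x+1)) * S := hbound
    _ < (x * (x+1) * (3 + (x+2)*M) / (1 + (x+1)*M)) * S := by
        exact mul_lt_mul_of_pos_right hC hSpos
    _ ≤ (x * (x+1) * (3 + (x+2)*M) / (1 + (x+1)*M)) * (S + M * (p.eval 0)^2) := by
        refine mul_le_mul_of_nonneg_left ?_ hCnonneg
        nlinarith [sq_nonneg (p.eval 0)]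
end

section
/- Let M ≥ 0, and for each n ≥ 1 let μ_{1,n} denote the smallest real zero of A_n. Then there exist constants C₂ ≥ C₁ > 0 (depending only on M) such that C₁/n² ≤ μ_{1,n} ≤ C₂/n² for all n ≥ 1; in particular μ_{1,n} = O(1/n²) and the Markov–Bernstein constant 1/√μ_{1,n} grows like O(n). -/
open Polynomial

lemma sin_rec (a d : ℝ) : Real.sin (a + d) = 2 * Real.sin a * Real.cos d - Real.sin (a - d) := by
  rw [Real.sin_add, Real.sin_sub]; ring

lemma key_s11 (M : ℝ) (hM : (1:ℝ) + M ≠ 0) (δ : ℝ) : ∀ n : ℕ,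
    (1 + M) * Real.sin δ * ((ApolyB M n).eval (2 - 2 * Real.cos δ)) =
      (-1 : ℝ)^n * ((1 + M) * Real.sin ((n:ℝ) * δ + δ) - Real.sin ((n:ℝ) * δ)) := by
  intro n
  induction n using Nat.twoStepInduction with
  | zero => simp [ApolyB]
  | one =>
    have h2 : Real.sin (δ + δ) = 2 * Real.sin δ * Real.cos δ := by
      rw [show δ + δ = 2*δ by ring, Real.sin_two_mul]
    simp only [ApolyB, Nat.cast_one, eval_sub, eval_X, eval_C, pow_one, one_mul, h2]
    field_simp
    ring
  | more n ih1 ih2 =>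
    have hx : (ApolyB M (n+2)).eval (2 - 2*Real.cos δ)
        = (-2*Real.cos δ) * (ApolyB M (n+1)).eval (2-2*Real.cos δ)
          - (ApolyB M n).eval (2-2*Real.cos δ) := by
      simp [ApolyB]
    have t3 := sin_rec ((n:ℝ) * δ + δ + δ) δ
    have t2 := sin_rec ((n:ℝ) * δ + δ) δ
    rw [hx]
    push_cast at ih1 ih2 ⊢
    ring_nf at t3 t2 ih1 ih2 ⊢
    linear_combination (norm := ring_nf) (-2*Real.cos δ) * ih2 - ih1
      - ((-1:ℝ))^n * (1+M) * t3 + ((-1:ℝ))^n * t2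

lemma apos (M x : ℝ) (hM : 0 ≤ M) (hx : x ≤ 0) : ∀ n : ℕ,
    1 ≤ (-1:ℝ)^n * (ApolyB M n).eval x ∧
    (-1:ℝ)^n * (ApolyB M n).eval x ≤ (-1:ℝ)^(n+1) * (ApolyB M (n+1)).eval x := by
  intro n
  induction n with
  | zero =>
    have hc : (1:ℝ) ≤ (1 + 2*M)/(1 + M) := by
      rw [le_div_iff₀ (by linarith)]; linarith
    constructor
    · simp [ApolyB]
    · simp only [ApolyB, pow_zero, pow_one, one_mul, eval_one, eval_sub, eval_X, eval_C]
      linarith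
  | succ n ih =>
    obtain ⟨h1, h2⟩ := ih
    have e : (-1:ℝ)^(n+2) * (ApolyB M (n+2)).eval x
        = (2 - x) * ((-1:ℝ)^(n+1) * (ApolyB M (n+1)).eval x) - (-1:ℝ)^n * (ApolyB M n).eval x := by
      simp only [ApolyB, eval_sub, eval_mul, eval_X, eval_C]
      ring
    constructor
    · linarith
    · rw [e]
      nlinarith [mul_nonneg (neg_nonneg.2 hx)
        (by linarith : (0:ℝ) ≤ (-1:ℝ)^(n+1) * (ApolyB M (n+1)).eval x)]

set_option maxHeartbeats 1000000 in
theorem stmt11 (M : ℝ) (hM : 0 ≤ M) :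
    ∃ C₁ C₂ : ℝ, 0 < C₁ ∧ C₁ ≤ C₂ ∧
      ∀ n : ℕ, 1 ≤ n → ∃ μ : ℝ,
        IsLeast {x : ℝ | (ApolyB M n).eval x = 0} μ ∧
        C₁ / (n : ℝ) ^ 2 ≤ μ ∧ μ ≤ C₂ / (n : ℝ) ^ 2 := by
  have hM1 : (0:ℝ) < 1 + M := by linarith
  have hM1' : (1:ℝ) + M ≠ 0 := ne_of_gt hM1
  have hπ := Real.pi_pos
  refine ⟨1/4, Real.pi^2, by norm_num, by nlinarith [Real.pi_gt_three], ?_⟩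
  intro n hn
  have hn1 : (1:ℝ) ≤ (n:ℝ) := by exact_mod_cast hn
  have hn1pos : (0:ℝ) < (n:ℝ) + 1 := by linarith
  set b : ℝ := Real.pi / ((n:ℝ) + 1) with hb
  set a : ℝ := b / 2 with ha
  have hbpos : 0 < b := div_pos hπ hn1pos
  have hapos : 0 < a := by rw [ha]; linarith
  have hab : a ≤ b := by rw [ha]; linarith
  have hb2 : b ≤ Real.pi / 2 := by
    rw [hb, div_le_div_iff₀ hn1pos two_pos]; nlinarith
  set g : ℝ → ℝ := fun δ => (1 + M) * Real.sin ((n:ℝ) * δ + δ) - Real.sin ((n:ℝ) * δ) with hg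
  have hgc : Continuous g := by
    rw [hg]; fun_prop
  have hna : (n:ℝ) * a + a = Real.pi / 2 := by
    rw [ha, hb]; field_simp
  have hga : 0 < g a := by
    have h1 : Real.sin ((n:ℝ)*a + a) = 1 := by rw [hna, Real.sin_pi_div_two]
    have hlt : (n:ℝ)*a < Real.pi/2 := by nlinarith
    have h0 : 0 ≤ (n:ℝ)*a := by positivity
    have h2 : Real.sin ((n:ℝ)*a) < 1 := by
      have := Real.strictMonoOn_sin (Set.mem_Icc.2 ⟨by linarith, by linarith⟩)
        (Set.mem_Icc.2 ⟨by linarith, le_refl _⟩) hlt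
      rwa [Real.sin_pi_div_two] at this
    simp only [hg, h1]
    nlinarith
  have hnb : (n:ℝ) * b + b = Real.pi := by
    rw [hb]; field_simp
  have hgb : g b < 0 := by
    have h1 : Real.sin ((n:ℝ)*b + b) = 0 := by rw [hnb, Real.sin_pi]
    have h2 : 0 < Real.sin ((n:ℝ)*b) := by
      apply Real.sin_pos_of_pos_of_lt_pi
      · positivity
      · nlinarith
    simp only [hg, h1]
    nlinarith
  have hSne : (Set.Icc a b ∩ g ⁻¹' {0}).Nonempty := by
    obtain ⟨δ, hδ, hδ0⟩ := intermediate_value_Icc' hab hgc.continuousOn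
      (Set.mem_Icc.2 ⟨le_of_lt hgb, le_of_lt hga⟩)
    exact ⟨δ, hδ, hδ0⟩
  have hScpt : IsCompact (Set.Icc a b ∩ g ⁻¹' {0}) :=
    isCompact_Icc.inter_right (isClosed_singleton.preimage hgc)
  obtain ⟨δ₀, hδ₀S, hleast⟩ := hScpt.exists_isLeast hSne
  obtain ⟨⟨hδ₀a, hδ₀b⟩, hδ₀z'⟩ := hδ₀S
  have hgδ₀ : g δ₀ = 0 := hδ₀z'
  have haδ₀ : a < δ₀ := lt_of_le_of_ne hδ₀a (by rintro rfl; exact absurd hgδ₀ (ne_of_gt hga))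
  have hδ₀pos : 0 < δ₀ := lt_trans hapos haδ₀
  have hδ₀ltπ : δ₀ < Real.pi := by linarith
  have hgpos : ∀ δ, 0 < δ → δ < δ₀ → 0 < g δ := by
    intro δ hδpos hδlt
    rcases le_or_gt δ a with hle | hgt
    · have h1 : (n:ℝ)*δ + δ ≤ Real.pi/2 := by nlinarith
      have h0 : 0 ≤ (n:ℝ)*δ := by positivity
      have hmono := Real.strictMonoOn_sin
        (Set.mem_Icc.2 ⟨by linarith, by linarith⟩)
        (Set.mem_Icc.2 ⟨by linarith, by linarith⟩)
        (by linarith : (n:ℝ)*δ < (n:ℝ)*δ + δ)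
      have hsnn : 0 ≤ Real.sin ((n:ℝ)*δ + δ) :=
        Real.sin_nonneg_of_nonneg_of_le_pi (by linarith) (by linarith)
      simp only [hg]
      nlinarith
    · by_contra hcon
      push_neg at hcon
      obtain ⟨δ', ⟨hδ'a, hδ'δ⟩, hδ'0⟩ := intermediate_value_Icc' (le_of_lt hgt)
        hgc.continuousOn (Set.mem_Icc.2 ⟨hcon, le_of_lt hga⟩)
      have hmem : δ' ∈ Set.Icc a b ∩ g ⁻¹' {0} := ⟨⟨hδ'a, by linarith⟩, hδ'0⟩
      have := hleast hmem
      linarith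
  have hsδ₀ : 0 < Real.sin δ₀ := Real.sin_pos_of_pos_of_lt_pi hδ₀pos hδ₀ltπ
  have heval0 : (ApolyB M n).eval (2 - 2 * Real.cos δ₀) = 0 := by
    have hk := key_s11 M hM1' δ₀ n
    have hz : (1 + M) * Real.sin ((n:ℝ) * δ₀ + δ₀) - Real.sin ((n:ℝ) * δ₀) = 0 := by
      have := hgδ₀; simp only [hg] at this; exact this
    rw [hz, mul_zero] at hk
    rcases mul_eq_zero.mp hk with h | h
    · exact absurd h (ne_of_gt (mul_pos hM1 hsδ₀))
    · exact h
  refine ⟨2 - 2 * Real.cos δ₀, ⟨heval0, ?_⟩, ?_, ?_⟩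
  · -- lower bound of the zero set
    rintro x hxz
    simp only [Set.mem_setOf_eq] at hxz
    by_contra hxlt
    push_neg at hxlt
    have hx0 : 0 < x := by
      by_contra h
      push_neg at h
      have h1 := (apos M x hM h n).1
      rw [hxz, mul_zero] at h1
      linarith
    have hcos0 : 0 ≤ Real.cos δ₀ :=
      Real.cos_nonneg_of_mem_Icc (Set.mem_Icc.2 ⟨by linarith, by linarith⟩)
    have hm1 : (-1:ℝ) ≤ 1 - x/2 := by nlinarith
    have hm2 : 1 - x/2 ≤ 1 := by linarith
    set δ : ℝ := Real.arccos (1 - x/2) with hδdef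
    have hcδ : Real.cos δ = 1 - x/2 := Real.cos_arccos hm1 hm2
    have hδpos : 0 < δ := Real.arccos_pos.2 (by linarith)
    have hδlt : δ < δ₀ := by
      by_contra hc
      push_neg at hc
      have hle : Real.cos δ ≤ Real.cos δ₀ := by
        rcases eq_or_lt_of_le hc with heq | hlt
        · rw [heq]
        · exact le_of_lt (Real.strictAntiOn_cos
            (Set.mem_Icc.2 ⟨by linarith, by linarith⟩)
            (Set.mem_Icc.2 ⟨Real.arccos_nonneg _, Real.arccos_le_pi _⟩) hlt)
      rw [hcδ] at hle
      linarith
    have hgδ := hgpos δ hδpos hδlt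
    have hk := key_s11 M hM1' δ n
    have hev : (ApolyB M n).eval (2 - 2*Real.cos δ) = 0 := by
      rw [hcδ, show 2 - 2*(1 - x/2) = x by ring, hxz]
    rw [hev, mul_zero] at hk
    have hgz : g δ = 0 := by
      simp only [hg]
      rcases mul_eq_zero.mp hk.symm with h | h
      · exact absurd h (pow_ne_zero n (by norm_num : (-1:ℝ) ≠ 0))
      · exact h
    linarith
  · -- lower bound 1/4 / n^2 ≤ μ
    have hhalf : δ₀ / 2 ≤ Real.pi / 2 := by linarith
    have hsin := Real.mul_le_sin (by linarith : (0:ℝ) ≤ δ₀/2) hhalf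
    have hc2 : Real.cos δ₀ = 1 - 2 * Real.sin (δ₀/2)^2 := by
      have h1 := Real.cos_two_mul (δ₀/2)
      have h2 := Real.sin_sq_add_cos_sq (δ₀/2)
      rw [show 2*(δ₀/2) = δ₀ by ring] at h1
      linarith
    have hs1 : 1/(2*((n:ℝ)+1)) ≤ Real.sin (δ₀/2) := by
      have hd : 1/(2*((n:ℝ)+1)) ≤ 2/Real.pi * (δ₀/2) := by
        have hπb : Real.pi = a * (2*((n:ℝ)+1)) := by
          rw [ha, hb]
          field_simp
        have e : 2/Real.pi * (δ₀/2) = δ₀ / Real.pi := by ring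
        rw [e, div_le_div_iff₀ (by positivity) hπ, hπb]
        nlinarith
      linarith
    rw [div_le_iff₀ (by positivity), hc2]
    rw [div_le_iff₀ (by positivity : (0:ℝ) < 2*((n:ℝ)+1))] at hs1
    have hsnn : 0 ≤ Real.sin (δ₀/2) :=
      Real.sin_nonneg_of_nonneg_of_le_pi (by linarith) (by linarith)
    have hA : 1 ≤ Real.sin (δ₀/2) * (4*(n:ℝ)) := by
      nlinarith [mul_nonneg hsnn (by linarith : (0:ℝ) ≤ 2*(n:ℝ) - 2)]
    nlinarith [sq_nonneg (Real.sin (δ₀/2) * (4*(n:ℝ)) - 1)]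
  · -- upper bound μ ≤ π^2/n^2
    have hc2 : Real.cos δ₀ = 1 - 2 * Real.sin (δ₀/2)^2 := by
      have h1 := Real.cos_two_mul (δ₀/2)
      have h2 := Real.sin_sq_add_cos_sq (δ₀/2)
      rw [show 2*(δ₀/2) = δ₀ by ring] at h1
      linarith
    have hsin : Real.sin (δ₀/2) ≤ δ₀/2 := Real.sin_le (by linarith)
    have hsnn : 0 ≤ Real.sin (δ₀/2) :=
      Real.sin_nonneg_of_nonneg_of_le_pi (by linarith) (by linarith)
    have hδb : δ₀ ≤ b := hδ₀b
    have hbn : b ≤ Real.pi / (n:ℝ) := by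
      rw [hb, div_le_div_iff₀ hn1pos (by linarith : (0:ℝ) < (n:ℝ))]
      nlinarith
    have hn0 : (0:ℝ) < (n:ℝ) := by linarith
    have hd : δ₀ * (n:ℝ) ≤ Real.pi := by
      have h1 : δ₀ ≤ Real.pi / (n:ℝ) := le_trans hδb hbn
      rw [le_div_iff₀ hn0] at h1
      exact h1
    have h2sn : 2 * Real.sin (δ₀/2) * (n:ℝ) ≤ Real.pi := by
      have := mul_le_mul_of_nonneg_right (by linarith : 2*Real.sin (δ₀/2) ≤ δ₀) (le_of_lt hn0)
      linarith
    have h2snn : 0 ≤ 2 * Real.sin (δ₀/2) * (n:ℝ) := by positivity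
    rw [le_div_iff₀ (by positivity), hc2]
    nlinarith [mul_self_le_mul_self h2snn h2sn]
end
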